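/- arXiv:1001.0559 — 10 statements merged into one kernel-verified Lean document; each statement's English description precedes it below -/
import Mathlib

section
/- Let f be holomorphic on an open neighborhood of a closed disk in ℂ and not constant on that disk. If the maximum of |f| over the closed disk is attained at a boundary point α, then f'(α) ≠ 0. -/
open Complex Metric

private lemma aux_ineq (a b T : ℝ) (h1 : b ^ 2 + a ^ 2 = 1) (h2 : 0 < T) (h3 : T < 2 * a) :
    (T * a - 1) * (T * a - 1) + T * b * (T * b) ≤ 1 := by
  nlinarith [mul_pos h2 (sub_pos.mpr h3), h1, sq_nonneg T]

private lemma aux_re_exp (a x : ℝ) :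
    ((a : ℂ) * Complex.exp ((x : ℂ) * Complex.I)).re = a * Real.cos x := by
  rw [Complex.exp_mul_I]
  simp [Complex.mul_re, Complex.cos_ofReal_re, Complex.sin_ofReal_re]

private lemma aux_re_exp' (t x : ℝ) :
    ((t : ℂ) * Complex.exp ((x : ℂ) * Complex.I) - 1).re = t * Real.cos x - 1 := by
  rw [Complex.exp_mul_I]
  simp [Complex.mul_re, Complex.cos_ofReal_re, Complex.sin_ofReal_re]

private lemma aux_im_exp' (t x : ℝ) :
    ((t : ℂ) * Complex.exp ((x : ℂ) * Complex.I) - 1).im = t * Real.sin x := by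
  rw [Complex.exp_mul_I]
  simp [Complex.mul_im, Complex.cos_ofReal_re, Complex.sin_ofReal_re]

/-- If `f` is holomorphic on an open neighborhood of a closed disk, not constant on the
disk, and `|f|` attains its maximum over the closed disk at a boundary point `α`, then
`f'(α) ≠ 0`. -/
theorem deriv_ne_zero_at_boundary_max
    (c : ℂ) (r : ℝ) (hr : 0 < r) (U : Set ℂ) (hU : IsOpen U)
    (hUc : closedBall c r ⊆ U) (f : ℂ → ℂ) (hf : DifferentiableOn ℂ f U)
    (hnc : ¬ ∃ w : ℂ, ∀ z ∈ closedBall c r, f z = w)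
    (α : ℂ) (hα : α ∈ sphere c r)
    (hmax : ∀ z ∈ closedBall c r, ‖f z‖ ≤ ‖f α‖) :
    deriv f α ≠ 0 := by
  intro hd
  have hαball : α ∈ closedBall c r := sphere_subset_closedBall hα
  -- `f α ≠ 0`
  have hfα : f α ≠ 0 := by
    intro h0
    refine hnc ⟨0, fun z hz => ?_⟩
    have := hmax z hz
    rw [h0, norm_zero] at this
    exact norm_eq_zero.mp (le_antisymm this (norm_nonneg _))
  -- a slightly larger ball inside U
  obtain ⟨δ, hδ, hδU⟩ := (isCompact_closedBall c r).exists_cthickening_subset_open hU hUc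
  rw [cthickening_closedBall hδ.le hr.le] at hδU
  set R : ℝ := δ + r with hR
  have hrR : r < R := by simp [hR]; linarith
  have hballU : ball c R ⊆ U := (ball_subset_closedBall).trans hδU
  have hfa : AnalyticOnNhd ℂ f U := hf.analyticOnNhd hU
  have hαU : α ∈ U := hUc hαball
  -- the difference is analytic, and not eventually zero near α
  have hg : AnalyticAt ℂ (fun z => f z - f α) α := (hfa α hαU).sub analyticAt_const
  have hne : ¬ ∀ᶠ z in nhds α, f z - f α = 0 := by
    intro hev
    refine hnc ⟨f α, fun z hz => ?_⟩
    have heq : Set.EqOn f (fun _ => f α) (ball c R) := by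
      apply AnalyticOnNhd.eqOn_of_preconnected_of_eventuallyEq
        (hfa.mono hballU) (fun z _ => analyticAt_const) ((convex_ball c R).isPreconnected)
        (show α ∈ ball c R by
          simp only [mem_ball]
          calc dist α c = r := hα
          _ < R := hrR)
      filter_upwards [hev] with z hz
      exact sub_eq_zero.mp hz
    exact heq (lt_of_le_of_lt (mem_closedBall.mp hz) hrR)
  obtain ⟨n, h, hh, hh0, heq⟩ :=
    hg.exists_eventuallyEq_pow_smul_nonzero_iff.mpr hne
  simp only [smul_eq_mul] at heq
  -- n ≥ 2
  have hn0 : n ≠ 0 := by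
    intro h0
    have := heq.self_of_nhds
    simp [h0] at this
    exact hh0 this.symm
  have hn1 : n ≠ 1 := by
    intro h1
    subst h1
    have hd1 : HasDerivAt (fun z => (z - α) ^ 1 * h z)
        ((1 : ℂ) * h α + (α - α) ^ 1 * deriv h α) α := by
      simpa [Pi.mul_def] using (((hasDerivAt_id α).sub_const α).pow 1).mul hh.differentiableAt.hasDerivAt
    have : deriv (fun z => f z - f α) α = (1 : ℂ) * h α + (α - α) ^ 1 * deriv h α := by
      rw [Filter.EventuallyEq.deriv_eq heq]
      exact hd1.deriv
    rw [deriv_sub_const, hd] at this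
    simp at this
    exact hh0 this.symm
  have hn2 : 2 ≤ n := by omega
  have hn2' : (2 : ℝ) ≤ (n : ℝ) := by exact_mod_cast hn2
  -- the key nonzero quantity and the chosen direction
  have hcα : c - α ≠ 0 := by
    intro h0
    have : dist α c = r := hα
    rw [dist_eq, show α - c = -(c - α) by ring, h0] at this
    simp at this
    linarith
  set w : ℂ := (starRingEnd ℂ) (f α) * h α * (c - α) ^ n with hw
  have hw0 : w ≠ 0 := by
    apply mul_ne_zero (mul_ne_zero _ hh0) (pow_ne_zero _ hcα)
    simpa using hfα
  set φ : ℝ := w.arg with hφ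
  have hφπ : |φ| ≤ Real.pi := Complex.abs_arg_le_pi w
  have hπ : (0:ℝ) < Real.pi := Real.pi_pos
  set θ : ℝ := -(3 * φ) / (5 * n) with hθ
  rw [abs_le] at hφπ
  have h5n : (10:ℝ) ≤ 5 * n := by linarith
  have hθval : θ * (5 * n) = -(3 * φ) := by
    rw [hθ]
    exact div_mul_cancel₀ _ (by positivity)
  have hθIoo : θ ∈ Set.Ioo (-(Real.pi/2)) (Real.pi/2) := by
    constructor
    · by_contra hc
      push_neg at hc
      have h1 : θ * (5 * n) ≤ θ * 10 := mul_le_mul_of_nonpos_left h5n (by linarith)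
      linarith [hφπ.2]
    · by_contra hc
      push_neg at hc
      have h1 : θ * 10 ≤ θ * (5 * n) := mul_le_mul_of_nonneg_left h5n (by linarith)
      linarith [hφπ.1]
  have hcosθ : 0 < Real.cos θ := Real.cos_pos_of_mem_Ioo hθIoo
  set v : ℂ := (c - α) * Complex.exp (θ * Complex.I) with hv
  -- positivity of the real part at t = 0
  have hWre : 0 < ((starRingEnd ℂ) (f α) * h α * v ^ n).re := by
    have hvn : v ^ n = (c - α) ^ n * Complex.exp ((n * θ : ℝ) * Complex.I) := by
      rw [hv, mul_pow, ← Complex.exp_nat_mul]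
      push_cast
      ring_nf
    have : (starRingEnd ℂ) (f α) * h α * v ^ n
        = (‖w‖ : ℂ) * Complex.exp ((φ + n * θ : ℝ) * Complex.I) := by
      rw [hvn, ← mul_assoc, ← hw]
      nth_rewrite 1 [← Complex.norm_mul_exp_arg_mul_I w]
      rw [mul_assoc, ← Complex.exp_add, ← hφ]
      push_cast
      ring_nf
    rw [this]
    rw [aux_re_exp ‖w‖ (φ + n * θ)]
    apply mul_pos (by simpa using hw0)
    apply Real.cos_pos_of_mem_Ioo
    have hψ : φ + n * θ = (2 / 5) * φ := by
      rw [hθ]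
      field_simp
      ring
    rw [hψ]
    constructor <;> nlinarith [hφπ.1, hφπ.2]
  -- eventual facts along the inward segment
  have htend : Filter.Tendsto (fun t : ℝ => α + (t : ℂ) * v) (nhdsWithin 0 (Set.Ioi 0)) (nhds α) := by
    apply Filter.Tendsto.mono_left _ nhdsWithin_le_nhds
    have : Continuous (fun t : ℝ => α + (t : ℂ) * v) := by fun_prop
    have := this.tendsto 0
    simpa using this
  have E1 : ∀ᶠ t : ℝ in nhdsWithin 0 (Set.Ioi 0),
      f (α + (t : ℂ) * v) - f α = ((α + (t : ℂ) * v) - α) ^ n * h (α + (t : ℂ) * v) :=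
    htend.eventually heq
  have E2 : ∀ᶠ t : ℝ in nhdsWithin 0 (Set.Ioi 0),
      0 < ((starRingEnd ℂ) (f α) * v ^ n * h (α + (t : ℂ) * v)).re := by
    have t1 : Filter.Tendsto (fun t : ℝ => h (α + (t : ℂ) * v))
        (nhdsWithin 0 (Set.Ioi 0)) (nhds (h α)) := hh.continuousAt.tendsto.comp htend
    have t2 := t1.const_mul ((starRingEnd ℂ) (f α) * v ^ n)
    have hcont : Filter.Tendsto (fun t : ℝ => ((starRingEnd ℂ) (f α) * v ^ n * h (α + (t : ℂ) * v)).re)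
        (nhdsWithin 0 (Set.Ioi 0)) (nhds (((starRingEnd ℂ) (f α) * v ^ n * h α).re)) :=
      (Complex.continuous_re.tendsto _).comp t2
    have hpos : 0 < ((starRingEnd ℂ) (f α) * v ^ n * h α).re := by
      have : (starRingEnd ℂ) (f α) * v ^ n * h α = (starRingEnd ℂ) (f α) * h α * v ^ n := by ring
      rw [this]; exact hWre
    exact hcont.eventually (eventually_gt_nhds hpos)
  have E3 : ∀ᶠ t : ℝ in nhdsWithin 0 (Set.Ioi 0), t < 2 * Real.cos θ := by
    have : Set.Iio (2 * Real.cos θ) ∈ nhdsWithin (0:ℝ) (Set.Ioi 0) :=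
      nhdsWithin_le_nhds (Iio_mem_nhds (by linarith))
    filter_upwards [this] with t ht using ht
  have E4 : ∀ᶠ t : ℝ in nhdsWithin (0:ℝ) (Set.Ioi 0), 0 < t :=
    eventually_mem_nhdsWithin
  obtain ⟨t, hfeq, hre, htc, ht0⟩ := (E1.and (E2.and (E3.and E4))).exists
  set z : ℂ := α + (t : ℂ) * v with hz
  -- z lies in the closed ball
  have hzball : z ∈ closedBall c r := by
    have hdist : z - c = (c - α) * ((t : ℂ) * Complex.exp (θ * Complex.I) - 1) := by
      rw [hz, hv]; ring
    rw [mem_closedBall, dist_eq, hdist, norm_mul]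
    have hca : ‖c - α‖ = r := by
      have : dist α c = r := hα
      rw [dist_eq] at this
      rw [show c - α = -(α - c) by ring, norm_neg]
      exact this
    rw [hca]
    have habs : ‖(t : ℂ) * Complex.exp (θ * Complex.I) - 1‖ ≤ 1 := by
      rw [← Real.sqrt_one]
      rw [Complex.norm_def]
      apply Real.sqrt_le_sqrt
      rw [Complex.normSq_apply, aux_re_exp' t θ, aux_im_exp' t θ]
      exact aux_ineq _ _ _ (Real.sin_sq_add_cos_sq θ) ht0 htc
    calc r * ‖(t : ℂ) * Complex.exp (θ * Complex.I) - 1‖ ≤ r * 1 :=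
      mul_le_mul_of_nonneg_left habs hr.le
    _ = r := mul_one r
  -- the contradiction
  have hfz : f z = f α + (t : ℂ) ^ n * (v ^ n * h z) := by
    have hz' : z - α = (t : ℂ) * v := by rw [hz]; ring
    have h2 := hfeq
    rw [hz', mul_pow] at h2
    linear_combination h2
  have hkey : ((starRingEnd ℂ) (f α) * f z).re
      = Complex.normSq (f α) + t ^ n * ((starRingEnd ℂ) (f α) * v ^ n * h z).re := by
    have e1 : (starRingEnd ℂ) (f α) * f z
        = (Complex.normSq (f α) : ℂ)
          + ((t ^ n : ℝ) : ℂ) * ((starRingEnd ℂ) (f α) * v ^ n * h z) := by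
      rw [hfz, ← Complex.mul_conj (f α)]
      push_cast
      ring
    rw [e1, Complex.add_re, Complex.ofReal_re, Complex.re_ofReal_mul]
  have hub : ((starRingEnd ℂ) (f α) * f z).re ≤ ‖f α‖ * ‖f α‖ := by
    calc ((starRingEnd ℂ) (f α) * f z).re ≤ ‖(starRingEnd ℂ) (f α) * f z‖ :=
      Complex.re_le_norm _
    _ = ‖f α‖ * ‖f z‖ := by rw [norm_mul, Complex.norm_conj]
    _ ≤ ‖f α‖ * ‖f α‖ :=
      mul_le_mul_of_nonneg_left (hmax z hzball) (norm_nonneg _)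
  rw [hkey] at hub
  have hnsq : Complex.normSq (f α) = ‖f α‖ * ‖f α‖ := by
    rw [Complex.normSq_eq_norm_sq]; ring
  have htn : 0 < t ^ n := pow_pos ht0 n
  nlinarith [hub, hre, htn, hnsq]
end

section
/- Let f be holomorphic on an open neighborhood of the closed disk {z ∈ ℂ : |z| ≤ r} centered at the origin (r > 0) and not constant on that disk. If the maximum of |f| over the closed disk is attained at a boundary point α (with |α| = r), then the quantity α·f'(α)/f(α) is a positive real number. -/
open Complex Metric


lemma aux_hasDerivAt_normSq {h : ℝ → ℂ} {h' : ℂ} {t : ℝ} (hh : HasDerivAt h h' t) :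
    HasDerivAt (fun s => Complex.normSq (h s)) (2 * ((starRingEnd ℂ) (h t) * h').re) t := by
  have h1 : HasDerivAt (fun s => (starRingEnd ℂ) (h s)) ((starRingEnd ℂ) h') t :=
    Complex.conjCLE.toContinuousLinearMap.hasFDerivAt.comp_hasDerivAt t hh
  have h2 := hh.mul h1
  have h3 := Complex.reCLM.hasFDerivAt.comp_hasDerivAt t h2
  have hfun : (fun s => Complex.normSq (h s)) = fun s => (h s * (starRingEnd ℂ) (h s)).re := by
    funext s; rw [Complex.mul_conj, Complex.ofReal_re]
  rw [hfun]
  refine h3.congr_deriv ?_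
  simp [Complex.add_re, Complex.mul_re, Complex.conj_re, Complex.conj_im]
  ring


lemma aux_quad {A t x s : ℝ} (hA0 : 0 ≤ A) (hA1 : A < 1) (ht0 : 0 < t) (ht1 : t < 1)
    (hx0 : 0 ≤ x) (hx1 : x ≤ 1) (hs : s ≤ A * x)
    (h2 : x^2 - 2*s + A^2 ≤ t^2 * (1 - 2*s + A^2 * x^2)) :
    (1 - A) * (1 - t) ≤ 2 * (1 - x) := by
  have hkey : (0:ℝ) ≤ (1 - t^2) * (A*x - s) := mul_nonneg (by nlinarith) (by linarith)
  have hp : ((1+A*t)*x - (A+t)) * ((1-A*t)*x - (A-t)) ≤ 0 := by nlinarith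
  have goal1 : x * (1 + A*t) ≤ A + t := by
    by_contra hcon
    push_neg at hcon
    have hf1 : 0 < (1+A*t)*x - (A+t) := by nlinarith
    have hf2 : (1-A*t)*x - (A-t) ≤ 0 := by
      by_contra h3
      push_neg at h3
      nlinarith [mul_pos hf1 h3]
    have hAx : A * x < 1 := by nlinarith
    nlinarith
  nlinarith [mul_nonneg (by linarith : (0:ℝ) ≤ 1 - x) (by nlinarith : (0:ℝ) ≤ 1 - A*t)]

set_option maxHeartbeats 1000000 in
/-- If `f` is holomorphic on a neighborhood of the closed disk of radius `r` about `0`,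
not constant on the disk, and `|f|` attains its maximum at the boundary point `α`, then
`α * f'(α) / f(α)` is a positive real number. -/
theorem boundary_max_ratio_pos_real
    (r : ℝ) (hr : 0 < r) (U : Set ℂ) (hU : IsOpen U)
    (hUc : closedBall (0 : ℂ) r ⊆ U) (f : ℂ → ℂ) (hf : DifferentiableOn ℂ f U)
    (hnc : ¬ ∃ w : ℂ, ∀ z ∈ closedBall (0 : ℂ) r, f z = w)
    (α : ℂ) (hα : α ∈ sphere (0 : ℂ) r)
    (hmax : ∀ z ∈ closedBall (0 : ℂ) r, ‖f z‖ ≤ ‖f α‖) :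
    (α * deriv f α / f α).im = 0 ∧ 0 < (α * deriv f α / f α).re := by
  have hα' : ‖α‖ = r := by simpa [Complex.dist_eq] using hα
  have hαb : α ∈ closedBall (0 : ℂ) r := by
    simp [mem_closedBall, Complex.dist_eq, hα'.le]
  have hαU : α ∈ U := hUc hαb
  have hfc : ContinuousOn f (closedBall 0 r) := hf.continuousOn.mono hUc
  have hfα : f α ≠ 0 := by
    intro h0
    apply hnc
    refine ⟨0, fun z hz => ?_⟩
    have h1 := hmax z hz
    rw [h0] at h1
    simp only [norm_zero] at h1
    exact norm_eq_zero.mp (le_antisymm h1 (norm_nonneg _))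
  have hdf : DifferentiableAt ℂ f α := hf.differentiableAt (hU.mem_nhds hαU)
  have hlt : ∀ z ∈ ball (0:ℂ) r, ‖f z‖ < ‖f α‖ := by
    intro z hz
    rcases (hmax z (ball_subset_closedBall hz)).lt_or_eq with h | heq
    · exact h
    · exfalso
      have hmaxon : IsMaxOn (norm ∘ f) (ball (0:ℂ) r) z := by
        intro w hw
        simpa [heq] using hmax w (ball_subset_closedBall hw)
      have hcst := Complex.eqOn_of_isPreconnected_of_isMaxOn_norm
        (convex_ball (0:ℂ) r).isPreconnected isOpen_ball
        (hf.mono (ball_subset_closedBall.trans hUc)) hz hmaxon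
      have hcl : Set.EqOn f (Function.const ℂ (f z)) (closedBall (0:ℂ) r) :=
        hcst.of_subset_closure hfc continuousOn_const ball_subset_closedBall
          (by rw [closure_ball (0:ℂ) hr.ne'])
      exact hnc ⟨f z, fun w hw => hcl hw⟩
  set M := ‖f α‖ with hM
  set g : ℂ → ℂ := fun z => f (α * z) / f α with hgdef
  have hα0 : α ≠ 0 := by
    intro h; rw [h] at hα'; simp at hα'; exact hr.ne' hα'.symm
  have hmem : ∀ z : ℂ, ‖z‖ ≤ 1 → α * z ∈ closedBall (0:ℂ) r := by
    intro z hz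
    simp only [mem_closedBall, Complex.dist_eq, sub_zero, norm_mul, hα']
    calc r * ‖z‖ ≤ r * 1 := by
          exact mul_le_mul_of_nonneg_left hz hr.le
      _ = r := mul_one r
  have hmem' : ∀ z : ℂ, ‖z‖ < 1 → α * z ∈ ball (0:ℂ) r := by
    intro z hz
    simp only [mem_ball, Complex.dist_eq, sub_zero, norm_mul, hα']
    calc r * ‖z‖ < r * 1 := by
          exact mul_lt_mul_of_pos_left hz hr
      _ = r := mul_one r
  have hgd : DifferentiableOn ℂ g (ball 0 1) := by
    apply DifferentiableOn.div_const
    apply hf.comp ((differentiable_id.const_mul α).differentiableOn)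
    intro z hz
    exact hUc (hmem z (by simpa [Complex.dist_eq] using (mem_ball.mp hz).le))
  have hg1 : g 1 = 1 := by simp [hgdef, div_self hfα]
  have hgle : ∀ z : ℂ, ‖z‖ ≤ 1 → ‖g z‖ ≤ 1 := by
    intro z hz
    rw [hgdef]
    simp only [norm_div]
    rw [div_le_one (norm_pos_iff.mpr hfα)]
    exact hmax _ (hmem z hz)
  have hglt : ∀ z : ℂ, ‖z‖ < 1 → ‖g z‖ < 1 := by
    intro z hz
    rw [hgdef]
    simp only [norm_div]
    rw [div_lt_one (norm_pos_iff.mpr hfα)]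
    exact hlt _ (hmem' z hz)
  set c : ℂ := α * deriv f α / f α with hc
  have hgc : HasDerivAt g c 1 := by
    have h0 : HasDerivAt (fun z : ℂ => α * z) α 1 := by
      simpa using (hasDerivAt_id (1:ℂ)).const_mul α
    have h1 : HasDerivAt (fun z : ℂ => f (α * z)) (deriv f α * α) 1 := by
      have hdf' : HasDerivAt f (deriv f α) (α * 1) := by
        rw [mul_one]; exact hdf.hasDerivAt
      exact HasDerivAt.comp 1 hdf' h0
    have := h1.div_const (f α)
    refine this.congr_deriv ?_
    rw [hc]; ring
  -- Imaginary part
  have him : c.im = 0 := by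
    have hu : HasDerivAt (fun t : ℝ => Complex.exp (t * I)) I 0 := by
      have h1 : HasDerivAt (fun t : ℝ => (t : ℂ) * I) I 0 := by
        simpa using (Complex.ofRealCLM.hasDerivAt (x := (0:ℝ))).mul_const I
      have h2 : HasDerivAt Complex.exp (Complex.exp ((0:ℝ) * I)) ((0:ℝ) * I) :=
        Complex.hasDerivAt_exp _
      have := h2.scomp 0 h1
      exact this.congr_deriv (by simp)
    have hgc' : HasDerivAt g c (Complex.exp ((0:ℝ) * I)) := by
      simpa using hgc
    have hh : HasDerivAt (fun t : ℝ => g (Complex.exp (t * I))) (I * c) 0 := by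
      have := hgc'.scomp 0 hu
      exact this.congr_deriv (by simp [smul_eq_mul])
    have hψ := aux_hasDerivAt_normSq hh
    have hh0 : g (Complex.exp ((0:ℝ) * I)) = 1 := by simpa using hg1
    have hlocmax : IsLocalMax (fun t : ℝ => Complex.normSq (g (Complex.exp (t * I)))) 0 := by
      apply Filter.Eventually.of_forall
      intro t
      have habs : ‖Complex.exp ((t:ℝ) * I)‖ = 1 := by
        rw [Complex.norm_exp]; simp
      have h1 : ‖g (Complex.exp ((t:ℝ) * I))‖ ≤ 1 := hgle _ (le_of_eq habs)
      have h2 : Complex.normSq (g (Complex.exp ((t:ℝ) * I))) ≤ 1 := by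
        rw [← Complex.sq_norm]; nlinarith [norm_nonneg (g (Complex.exp ((t:ℝ) * I)))]
      calc Complex.normSq (g (Complex.exp ((t:ℝ) * I))) ≤ 1 := h2
        _ = Complex.normSq (g (Complex.exp ((0:ℝ) * I))) := by rw [hh0]; simp
    have hder0 := hlocmax.hasDerivAt_eq_zero hψ
    rw [hh0] at hder0
    simp only [map_one, one_mul, Complex.mul_re, Complex.I_re, Complex.I_im] at hder0
    linarith
  -- Real part
  set a : ℂ := g 0 with ha
  set A : ℝ := ‖a‖ with hAdef
  have hA1 : A < 1 := hglt 0 (by norm_num)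
  have hA0 : 0 ≤ A := norm_nonneg a
  have hden : ∀ z : ℂ, ‖z‖ ≤ 1 → 1 - (starRingEnd ℂ) a * g z ≠ 0 := by
    intro z hz h0
    have h1 : (starRingEnd ℂ) a * g z = 1 := by linear_combination -h0
    have h2 : ‖(starRingEnd ℂ) a * g z‖ ≤ A * 1 := by
      rw [norm_mul, Complex.norm_conj]
      exact mul_le_mul_of_nonneg_left (hgle z hz) hA0
    rw [h1] at h2; simp at h2; linarith
  set φ : ℂ → ℂ := fun z => (g z - a) / (1 - (starRingEnd ℂ) a * g z) with hφdef
  have hφd : DifferentiableOn ℂ φ (ball 0 1) := by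
    apply DifferentiableOn.div (hgd.sub_const a)
    · exact (differentiableOn_const 1).sub ((differentiableOn_const _).mul hgd)
    · intro z hz
      exact hden z (le_of_lt (by simpa [Complex.dist_eq] using hz))
  have hφ0 : φ 0 = 0 := by simp [hφdef, ha]
  have hφmaps : Set.MapsTo φ (ball (0:ℂ) 1) (ball (0:ℂ) 1) := by
    intro z hz
    have hz1 : ‖z‖ < 1 := by simpa [Complex.dist_eq] using hz
    have hgz : Complex.normSq (g z) < 1 := by
      rw [← Complex.sq_norm]; nlinarith [hglt z hz1, norm_nonneg (g z)]
    have ha2 : Complex.normSq a < 1 := by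
      rw [← Complex.sq_norm, ← hAdef]; nlinarith
    have key : Complex.normSq (1 - (starRingEnd ℂ) a * g z) - Complex.normSq (g z - a)
        = (1 - Complex.normSq a) * (1 - Complex.normSq (g z)) := by
      simp only [Complex.normSq_apply, Complex.sub_re, Complex.sub_im, Complex.mul_re,
        Complex.mul_im, Complex.conj_re, Complex.conj_im, Complex.one_re, Complex.one_im]
      ring
    have hltSq : Complex.normSq (g z - a) < Complex.normSq (1 - (starRingEnd ℂ) a * g z) := by
      nlinarith [Complex.normSq_nonneg (g z - a)]
    have habslt : ‖g z - a‖ < ‖1 - (starRingEnd ℂ) a * g z‖ := by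
      rw [Complex.norm_def, Complex.norm_def]
      exact Real.sqrt_lt_sqrt (Complex.normSq_nonneg _) hltSq
    rw [mem_ball_zero_iff]
    rw [hφdef]
    simp only [norm_div]
    rw [div_lt_one (norm_pos_iff.mpr (hden z hz1.le))]
    exact habslt
  have hbound : ∀ t : ℝ, t ∈ Set.Ioo (0:ℝ) 1 → (1 - A)/2 ≤ (1 - (g (t:ℂ)).re)/(1 - t) := by
    rintro t ⟨ht0, ht1⟩
    have htabs : ‖((t:ℝ) : ℂ)‖ < 1 := by
      rw [Complex.norm_real, Real.norm_of_nonneg ht0.le]; exact ht1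
    have hφt := Complex.norm_le_norm_of_mapsTo_ball_self hφd (hφmaps.mono_right ball_subset_closedBall) hφ0 htabs
    set w : ℂ := g ((t:ℝ) : ℂ) with hw
    have hdenpos : 0 < ‖1 - (starRingEnd ℂ) a * w‖ :=
      norm_pos_iff.mpr (hden _ htabs.le)
    have h1 : ‖w - a‖ ≤ t * ‖1 - (starRingEnd ℂ) a * w‖ := by
      have h1' := hφt
      rw [hφdef] at h1'
      simp only [norm_div] at h1'
      rw [div_le_iff₀ hdenpos] at h1'
      rw [Complex.norm_real, Real.norm_of_nonneg ht0.le] at h1'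
      exact h1'
    have h2 : Complex.normSq (w - a) ≤ t^2 * Complex.normSq (1 - (starRingEnd ℂ) a * w) := by
      rw [← Complex.sq_norm, ← Complex.sq_norm]
      nlinarith [norm_nonneg (w - a), mul_nonneg ht0.le hdenpos.le]
    set x : ℝ := ‖w‖ with hx
    have hx1 : x ≤ 1 := hgle _ htabs.le
    have hx0 : 0 ≤ x := norm_nonneg w
    have hs : ((starRingEnd ℂ) a * w).re ≤ A * x := by
      calc ((starRingEnd ℂ) a * w).re ≤ ‖(starRingEnd ℂ) a * w‖ :=
            Complex.re_le_norm _
        _ = A * x := by rw [norm_mul, Complex.norm_conj]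
    have e1 : Complex.normSq (w - a) = x^2 - 2*((starRingEnd ℂ) a * w).re + A^2 := by
      rw [hx, hAdef, Complex.sq_norm, Complex.sq_norm]
      simp only [Complex.normSq_apply, Complex.sub_re, Complex.sub_im, Complex.mul_re,
        Complex.mul_im, Complex.conj_re, Complex.conj_im]
      ring
    have e2 : Complex.normSq (1 - (starRingEnd ℂ) a * w)
        = 1 - 2*((starRingEnd ℂ) a * w).re + A^2 * x^2 := by
      rw [hx, hAdef, Complex.sq_norm, Complex.sq_norm]
      simp only [Complex.normSq_apply, Complex.sub_re, Complex.sub_im, Complex.mul_re,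
        Complex.mul_im, Complex.conj_re, Complex.conj_im, Complex.one_re, Complex.one_im]
      ring
    have h2' : x^2 - 2*((starRingEnd ℂ) a * w).re + A^2
        ≤ t^2 * (1 - 2*((starRingEnd ℂ) a * w).re + A^2 * x^2) := by
      rw [← e1, ← e2]; exact h2
    have hq := aux_quad hA0 hA1 ht0 ht1 hx0 hx1 hs h2'
    have hrw : (g ((t:ℝ):ℂ)).re ≤ x := by rw [hx, hw]; exact Complex.re_le_norm w
    rw [div_le_div_iff₀ (by norm_num : (0:ℝ) < 2) (by linarith : (0:ℝ) < 1 - t)]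
    linarith
  have hG : HasDerivAt (fun t : ℝ => g ((t:ℝ):ℂ)) c 1 := by
    have hof : HasDerivAt (fun t : ℝ => ((t:ℝ):ℂ)) 1 1 := by
      exact (Complex.ofRealCLM.hasDerivAt (x := (1:ℝ))).congr_deriv (by simp)
    have hgc2 : HasDerivAt g c (((1:ℝ):ℂ)) := by simpa using hgc
    have := hgc2.scomp 1 hof
    exact this.congr_deriv (by simp)
  have htend := hasDerivAt_iff_tendsto_slope.mp hG
  have htre : Filter.Tendsto (fun t => (slope (fun t : ℝ => g ((t:ℝ):ℂ)) 1 t).re)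
      (nhdsWithin 1 {(1:ℝ)}ᶜ) (nhds c.re) :=
    (Complex.continuous_re.tendsto c).comp htend
  have hle : nhdsWithin (1:ℝ) (Set.Ioo 0 1) ≤ nhdsWithin 1 {(1:ℝ)}ᶜ :=
    nhdsWithin_mono 1 (fun x hx => ne_of_lt hx.2)
  haveI hnb : (nhdsWithin (1:ℝ) (Set.Ioo 0 1)).NeBot := by
    apply mem_closure_iff_nhdsWithin_neBot.mp
    rw [closure_Ioo (by norm_num : (0:ℝ) ≠ 1)]
    exact Set.right_mem_Icc.mpr (by norm_num)
  have hev : ∀ᶠ t in nhdsWithin (1:ℝ) (Set.Ioo 0 1),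
      (1-A)/2 ≤ (slope (fun t : ℝ => g ((t:ℝ):ℂ)) 1 t).re := by
    filter_upwards [self_mem_nhdsWithin] with t ht
    have hb := hbound t ht
    have hg1' : g (((1:ℝ):ℂ)) = 1 := by rw [Complex.ofReal_one, hg1]
    have ht1 : t - 1 ≠ 0 := by rcases ht with ⟨_, h⟩; intro h0; linarith [sub_eq_zero.mp h0]
    have hslope : (slope (fun t : ℝ => g ((t:ℝ):ℂ)) 1 t).re = (1 - (g ((t:ℝ):ℂ)).re)/(1 - t) := by
      have h1t : (1:ℝ) - t ≠ 0 := fun h0 => ht1 (by linarith)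
      have hinv : (t - 1)⁻¹ * (t - 1) = 1 := inv_mul_cancel₀ ht1
      rw [slope_def_module, hg1', Complex.smul_re, Complex.sub_re, Complex.one_re,
        eq_div_iff h1t]
      simp only [smul_eq_mul]
      linear_combination ((1:ℝ) - (g ((t:ℝ):ℂ)).re) * hinv
    rw [hslope]
    exact hb
  have hfin : (1-A)/2 ≤ c.re := ge_of_tendsto (htre.mono_left hle) hev
  exact ⟨him, lt_of_lt_of_le (by linarith : (0:ℝ) < (1-A)/2) hfin⟩
end

section
/- Let f be holomorphic on an open set containing the upper half-plane ℍ and the point 0, with f(z) ∈ ℍ for all z ∈ ℍ and f(0) = 0, and suppose f is not constant. Then f'(0) is a positive real number (in particular f'(0) ≠ 0). -/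
open Complex Filter Topology

private lemma exp_mul_I_mul_im (t : ℝ) (c : ℂ) :
    (Complex.exp (↑t * I) * c).im = Real.sin t * c.re + Real.cos t * c.im := by
  simp [Complex.mul_im, Complex.exp_ofReal_mul_I_re, Complex.exp_ofReal_mul_I_im]
  ring

/-- Key boundary lemma: if `z ^ n * g z` has positive imaginary part on the upper half
plane near `0` and `g` is continuous at `0`, then for every direction `θ ∈ (0, π)` the
limit value `exp(θ i)^n * g 0` has nonnegative imaginary part. -/
private lemma key_lemma (g : ℂ → ℂ) (hg : ContinuousAt g 0) (n : ℕ)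
    (hpos : ∀ᶠ z in 𝓝 (0:ℂ), 0 < z.im → 0 < (z ^ n * g z).im)
    (θ : ℝ) (hθ0 : 0 < θ) (hθπ : θ < Real.pi) :
    0 ≤ (Complex.exp (↑θ * I) ^ n * g 0).im := by
  set w : ℂ := Complex.exp (↑θ * I) with hw
  have hwim : w.im = Real.sin θ := Complex.exp_ofReal_mul_I_im θ
  have hsin : 0 < Real.sin θ := Real.sin_pos_of_pos_of_lt_pi hθ0 hθπ
  have hz : Tendsto (fun r : ℝ => (r : ℂ) * w) (𝓝[>] 0) (𝓝 0) := by
    have hc : Continuous (fun r : ℝ => (r : ℂ) * w) := by continuity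
    have := (hc.tendsto 0).mono_left (nhdsWithin_le_nhds (s := Set.Ioi (0:ℝ)))
    simpa using this
  have hF : Tendsto (fun r : ℝ => (w ^ n * g ((r : ℂ) * w)).im) (𝓝[>] 0)
      (𝓝 ((w ^ n * g 0).im)) := by
    have h1 : Tendsto (fun r : ℝ => g ((r : ℂ) * w)) (𝓝[>] 0) (𝓝 (g 0)) :=
      hg.tendsto.comp hz
    exact (Complex.continuous_im.tendsto _).comp (tendsto_const_nhds.mul h1)
  have hev : ∀ᶠ r : ℝ in 𝓝[>] 0, 0 ≤ (w ^ n * g ((r : ℂ) * w)).im := by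
    filter_upwards [hz.eventually hpos, self_mem_nhdsWithin] with r hr hrpos
    have him : ((r : ℂ) * w).im = r * Real.sin θ := by
      simp [Complex.im_ofReal_mul, hwim]
    have h1 : 0 < (((r : ℂ) * w) ^ n * g ((r : ℂ) * w)).im := by
      apply hr; rw [him]; exact mul_pos hrpos hsin
    have h2 : (((r : ℂ) * w) ^ n * g ((r : ℂ) * w)).im
        = r ^ n * (w ^ n * g ((r : ℂ) * w)).im := by
      rw [mul_pow, mul_assoc, ← Complex.ofReal_pow, Complex.im_ofReal_mul]
    rw [h2] at h1
    have hrn : 0 < (r : ℝ) ^ n := pow_pos hrpos n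
    rcases mul_pos_iff.mp h1 with ⟨_, h⟩ | ⟨h, _⟩
    · exact le_of_lt h
    · exact absurd h (not_lt.mpr hrn.le)
  exact ge_of_tendsto hF hev

/-- A nonconstant holomorphic self-map of the upper half-plane that extends
holomorphically past the boundary fixed point `0` has positive real derivative there. -/
theorem deriv_pos_at_boundary_fixed_point
    (U : Set ℂ) (hU : IsOpen U) (hUH : {z : ℂ | 0 < z.im} ⊆ U) (h0U : (0 : ℂ) ∈ U)
    (f : ℂ → ℂ) (hf : DifferentiableOn ℂ f U)
    (hmap : ∀ z : ℂ, 0 < z.im → 0 < (f z).im)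
    (hfix : f 0 = 0)
    (hnc : ¬ ∃ w : ℂ, ∀ z : ℂ, 0 < z.im → f z = w) :
    (deriv f 0).im = 0 ∧ 0 < (deriv f 0).re := by
  have hA : AnalyticAt ℂ f 0 := hf.analyticAt (hU.mem_nhds h0U)
  -- the order of vanishing of f at 0 is finite
  have hne : analyticOrderAt f 0 ≠ ⊤ := by
    intro htop
    have h0 : ∀ᶠ z in 𝓝 (0:ℂ), f z = 0 := analyticOrderAt_eq_top.mp htop
    have hz : Tendsto (fun r : ℝ => (r : ℂ) * I) (𝓝[>] 0) (𝓝 0) := by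
      have hc : Continuous (fun r : ℝ => (r : ℂ) * I) := by continuity
      have := (hc.tendsto 0).mono_left (nhdsWithin_le_nhds (s := Set.Ioi (0:ℝ)))
      simpa using this
    have := (hz.eventually h0).and self_mem_nhdsWithin
    rcases this.exists with ⟨r, hfr, hrpos⟩
    have : 0 < (f ((r : ℂ) * I)).im := hmap _ (by simpa using hrpos)
    rw [hfr] at this; simp at this
  set n : ℕ := (analyticOrderAt f 0).toNat with hn
  have horder : analyticOrderAt f 0 = n := (ENat.coe_toNat hne).symm
  obtain ⟨g, hgA, hg0, hfg⟩ := (hA.analyticOrderAt_eq_natCast (n := n)).mp horder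
  have hfg' : ∀ᶠ z in 𝓝 (0:ℂ), f z = z ^ n * g z := by
    filter_upwards [hfg] with z hz; simpa using hz
  -- n ≠ 0
  have hn0 : n ≠ 0 := by
    intro h
    have := hfg'.self_of_nhds
    rw [h, pow_zero, one_mul, hfix] at this
    exact hg0 this.symm
  -- the key inequality
  have hpos : ∀ᶠ z in 𝓝 (0:ℂ), 0 < z.im → 0 < (z ^ n * g z).im := by
    filter_upwards [hfg'] with z hz him
    rw [← hz]; exact hmap z him
  have hkey : ∀ t : ℝ, 0 < t → t < Real.pi →
      0 ≤ (Complex.exp (↑t * I) ^ n * g 0).im :=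
    fun t h1 h2 => key_lemma g hgA.continuousAt n hpos t h1 h2
  -- Reformulate: for all t ∈ (0, n π), 0 ≤ Im (exp(t i) * g 0)
  have hkey' : ∀ t : ℝ, 0 < t → t < n * Real.pi →
      0 ≤ (Complex.exp (↑t * I) * g 0).im := by
    intro t ht1 ht2
    have hnpos : 0 < (n : ℝ) := by
      exact_mod_cast Nat.pos_of_ne_zero hn0
    have h1 : 0 < t / n := div_pos ht1 hnpos
    have h2 : t / n < Real.pi := by
      rw [div_lt_iff₀ hnpos]; linarith [ht2]
    have := hkey (t / n) h1 h2
    have hnne : (n : ℂ) ≠ 0 := Nat.cast_ne_zero.mpr hn0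
    rwa [← Complex.exp_nat_mul, show ((n : ℂ) * (↑(t / (n:ℝ)) * I)) = ↑t * I by
      push_cast; rw [div_mul_eq_mul_div, mul_div_assoc']; exact mul_div_cancel_left₀ _ hnne] at this
  set c : ℂ := g 0 with hc
  have hE : ∀ t : ℝ, 0 < t → t < n * Real.pi →
      0 ≤ Real.sin t * c.re + Real.cos t * c.im := by
    intro t h1 h2
    have := hkey' t h1 h2
    rwa [exp_mul_I_mul_im] at this
  -- rule out n ≥ 2
  have hn1 : n = 1 := by
    by_contra hne1
    have hn2 : 2 ≤ n := by omega
    have hn2' : (2 : ℝ) ≤ (n : ℝ) := by exact_mod_cast hn2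
    have pi_pos := Real.pi_pos
    -- for t ∈ (0, π), both t and t + π are in (0, n π), so Im vanishes
    have hzero : ∀ t : ℝ, 0 < t → t < Real.pi →
        Real.sin t * c.re + Real.cos t * c.im = 0 := by
      intro t h1 h2
      have e1 := hE t h1 (by nlinarith)
      have e2 := hE (t + Real.pi) (by linarith) (by nlinarith)
      rw [Real.sin_add_pi, Real.cos_add_pi] at e2
      linarith
    have h1 := hzero (Real.pi / 2) (by linarith) (by linarith)
    rw [Real.sin_pi_div_two, Real.cos_pi_div_two] at h1
    have hre : c.re = 0 := by linarith
    have h2 := hzero (Real.pi / 4) (by linarith) (by linarith)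
    rw [Real.sin_pi_div_four, Real.cos_pi_div_four, hre] at h2
    have hs2 : (0:ℝ) < Real.sqrt 2 / 2 := by positivity
    have him : c.im = 0 := by
      have := h2
      nlinarith
    exact hg0 (Complex.ext hre him)
  -- with n = 1: imaginary part of c is 0 and real part positive
  rw [hn1] at hE
  simp only [Nat.cast_one, one_mul] at hE
  have pi_pos := Real.pi_pos
  have him0 : c.im = 0 := by
    have hge : 0 ≤ c.im := by
      have hF : Tendsto (fun t : ℝ => Real.sin t * c.re + Real.cos t * c.im)
          (𝓝[>] 0) (𝓝 (Real.sin 0 * c.re + Real.cos 0 * c.im)) := by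
        apply Tendsto.mono_left _ nhdsWithin_le_nhds
        exact Continuous.tendsto ((Real.continuous_sin.mul continuous_const).add
          (Real.continuous_cos.mul continuous_const)) 0
      have hev : ∀ᶠ t : ℝ in 𝓝[>] 0,
          0 ≤ Real.sin t * c.re + Real.cos t * c.im := by
        filter_upwards [self_mem_nhdsWithin,
          eventually_nhdsWithin_of_eventually_nhds (Iio_mem_nhds pi_pos)] with t h1 h2
        exact hE t h1 h2
      have := ge_of_tendsto hF hev
      simpa using this
    have hle : c.im ≤ 0 := by
      have hF : Tendsto (fun t : ℝ => Real.sin t * c.re + Real.cos t * c.im)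
          (𝓝[<] Real.pi) (𝓝 (Real.sin Real.pi * c.re + Real.cos Real.pi * c.im)) := by
        apply Tendsto.mono_left _ nhdsWithin_le_nhds
        exact Continuous.tendsto ((Real.continuous_sin.mul continuous_const).add
          (Real.continuous_cos.mul continuous_const)) Real.pi
      have hev : ∀ᶠ t : ℝ in 𝓝[<] Real.pi,
          0 ≤ Real.sin t * c.re + Real.cos t * c.im := by
        filter_upwards [self_mem_nhdsWithin,
          eventually_nhdsWithin_of_eventually_nhds (Ioi_mem_nhds pi_pos)] with t h1 h2
        exact hE t h2 h1
      have := ge_of_tendsto hF hev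
      rw [Real.sin_pi, Real.cos_pi] at this
      linarith
    linarith
  have hre_nonneg : 0 ≤ c.re := by
    have := hE (Real.pi / 2) (by linarith) (by linarith)
    rw [Real.sin_pi_div_two, Real.cos_pi_div_two] at this
    linarith
  have hre_pos : 0 < c.re := by
    rcases lt_or_eq_of_le hre_nonneg with h | h
    · exact h
    · exact absurd (Complex.ext h.symm him0) hg0
  -- compute the derivative
  have hEq : f =ᶠ[𝓝 (0:ℂ)] fun z => z * g z := by
    filter_upwards [hfg'] with z hz
    rw [hz, hn1, pow_one]
  have hderiv : deriv f 0 = c := by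
    rw [hEq.deriv_eq]
    have hd : HasDerivAt (fun z : ℂ => z * g z) (1 * g 0 + 0 * deriv g 0) 0 :=
      (hasDerivAt_id 0).mul hgA.differentiableAt.hasDerivAt
    rw [hd.deriv]; simp [hc]
  rw [hderiv]
  exact ⟨him0, hre_pos⟩
end

section
/- (Julia's fundamental inequality) Let f be holomorphic on an open set containing the upper half-plane ℍ and the point 0, with f(z) ∈ ℍ for all z ∈ ℍ, f(0) = 0, and f not constant. Then for every z ∈ ℍ: f'(0) · Im(f(z))/|f(z)|² ≥ Im(z)/|z|², where f'(0) is a positive real number. -/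
open Complex Metric Set Filter Topology

lemma aux_sq (p q : ℂ) : ‖p - (starRingEnd ℂ) q‖ ^ 2 =
    ‖p - q‖ ^ 2 + 4 * p.im * q.im := by
  simp only [Complex.sq_norm, Complex.normSq_apply, Complex.sub_re, Complex.sub_im,
    Complex.conj_re, Complex.conj_im]
  ring

lemma aux_ne (p q : ℂ) (hp : 0 < p.im) (hq : 0 < q.im) : p - (starRingEnd ℂ) q ≠ 0 := by
  intro h
  have : (p - (starRingEnd ℂ) q).im = 0 := by rw [h]; simp
  simp only [Complex.sub_im, Complex.conj_im, sub_neg_eq_add] at this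
  linarith

lemma aux_lt (p q : ℂ) (hp : 0 < p.im) (hq : 0 < q.im) :
    ‖p - q‖ < ‖p - (starRingEnd ℂ) q‖ := by
  have h1 := aux_sq p q
  have h2 : ‖p - q‖ ^ 2 < ‖p - (starRingEnd ℂ) q‖ ^ 2 := by nlinarith
  exact lt_of_pow_lt_pow_left₀ 2 (norm_nonneg _) h2

lemma schwarz_pick (U : Set ℂ) (hU : IsOpen U) (hUH : {z : ℂ | 0 < z.im} ⊆ U)
    (f : ℂ → ℂ) (hf : DifferentiableOn ℂ f U)
    (hmap : ∀ z : ℂ, 0 < z.im → 0 < (f z).im)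
    (z w : ℂ) (hz : 0 < z.im) (hw : 0 < w.im) :
    w.im * z.im / ‖w - (starRingEnd ℂ) z‖ ^ 2 ≤
      (f w).im * (f z).im / ‖f w - (starRingEnd ℂ) (f z)‖ ^ 2 := by
  set a := f z with ha_def
  have ha : 0 < a.im := hmap z hz
  set W : ℂ → ℂ := fun u => (z - (starRingEnd ℂ) z * u) / (1 - u) with hW
  set φ : ℂ → ℂ := fun p => (p - a) / (p - (starRingEnd ℂ) a) with hφ
  -- basic facts
  have hczz : z - (starRingEnd ℂ) z ≠ 0 := by
    intro h
    have : (z - (starRingEnd ℂ) z).im = 0 := by rw [h]; simp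
    simp only [Complex.sub_im, Complex.conj_im, sub_neg_eq_add] at this
    linarith
  have hWim : ∀ u : ℂ, u ∈ ball (0:ℂ) 1 → 0 < (W u).im := by
    intro u hu
    have hu1 : ‖u‖ < 1 := by simpa using hu
    have hden : (1 : ℂ) - u ≠ 0 := by
      intro h
      have : u = 1 := by linear_combination -h
      rw [this] at hu1; simp at hu1
    have hns : 0 < Complex.normSq (1 - u) := Complex.normSq_pos.mpr hden
    have husq : u.re ^ 2 + u.im ^ 2 < 1 := by
      have h1 : ‖u‖ ^ 2 < 1 := by nlinarith [norm_nonneg u]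
      rw [Complex.sq_norm, Complex.normSq_apply] at h1
      nlinarith
    rw [hW]
    simp only [Complex.div_im]
    rw [← sub_div]
    apply div_pos _ hns
    simp only [Complex.sub_im, Complex.sub_re, Complex.mul_im, Complex.mul_re,
      Complex.conj_re, Complex.conj_im, Complex.one_re, Complex.one_im]
    nlinarith [hz]
  -- φ maps upper half plane into unit ball
  have hφball : ∀ p : ℂ, 0 < p.im → ‖φ p‖ < 1 := by
    intro p hp
    rw [hφ]
    simp only [norm_div]
    rw [div_lt_one (norm_pos_iff.mpr (aux_ne p a hp ha))]
    exact aux_lt p a hp ha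
  have hdenball : ∀ u : ℂ, u ∈ ball (0:ℂ) 1 → (1 : ℂ) - u ≠ 0 := by
    intro u hu h
    have hu1 : ‖u‖ < 1 := by simpa using hu
    have : u = 1 := by linear_combination -h
    rw [this] at hu1; simp at hu1
  set g : ℂ → ℂ := fun u => φ (f (W u)) with hg
  have hdiff : DifferentiableOn ℂ g (ball (0:ℂ) 1) := by
    intro u hu
    have hWu : DifferentiableAt ℂ W u := by
      apply DifferentiableAt.div
      · fun_prop
      · fun_prop
      · exact hdenball u hu
    have hWuim := hWim u hu
    have hfWu : DifferentiableAt ℂ f (W u) := hf.differentiableAt (hU.mem_nhds (hUH hWuim))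
    have hcomp : DifferentiableAt ℂ (fun v => f (W v)) u := hfWu.comp u hWu
    have hdenom : f (W u) - (starRingEnd ℂ) a ≠ 0 := aux_ne _ _ (hmap _ hWuim) ha
    exact ((hcomp.sub_const a).div (hcomp.sub_const ((starRingEnd ℂ) a)) hdenom).differentiableWithinAt
  have hmaps : MapsTo g (ball (0:ℂ) 1) (ball (0:ℂ) 1) := by
    intro u hu
    rw [mem_ball_zero_iff]
    exact hφball _ (hmap _ (hWim u hu))
  have hg0 : g 0 = 0 := by
    have hW0 : W 0 = z := by rw [hW]; simp
    rw [hg]; simp only [hW0, ← ha_def, hφ]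
    simp
  -- the point u₀
  set u₀ : ℂ := (w - z) / (w - (starRingEnd ℂ) z) with hu₀
  have hwden : w - (starRingEnd ℂ) z ≠ 0 := aux_ne w z hw hz
  have habsu₀ : ‖u₀‖ < 1 := by
    rw [hu₀, norm_div, div_lt_one (norm_pos_iff.mpr hwden)]
    exact aux_lt w z hw hz
  have key := Complex.norm_le_norm_of_mapsTo_ball hdiff (hmaps.mono_right ball_subset_closedBall) hg0 habsu₀
  have hWu₀ : W u₀ = w := by
    have hd2 : (1 : ℂ) - u₀ = (z - (starRingEnd ℂ) z) / (w - (starRingEnd ℂ) z) := by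
      rw [hu₀]; field_simp; ring
    rw [hW, hu₀]
    rw [div_eq_iff]
    · field_simp
      ring
    · rw [← hu₀, hd2]
      exact div_ne_zero hczz hwden
  replace key : ‖φ (f w)‖ ≤ ‖u₀‖ := by
    simpa only [hg, hWu₀] using key
  rw [hφ] at key
  simp only [norm_div, hu₀] at key
  set P := ‖f w - a‖ with hP
  set Q := ‖f w - (starRingEnd ℂ) a‖ with hQ
  set p := ‖w - z‖ with hp
  set q := ‖w - (starRingEnd ℂ) z‖ with hq
  have hQpos : 0 < Q := norm_pos_iff.mpr (aux_ne _ _ (hmap w hw) ha)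
  have hqpos : 0 < q := norm_pos_iff.mpr hwden
  have h4 : P * q ≤ p * Q := by
    rw [div_le_div_iff₀ hQpos hqpos] at key
    linarith
  have h5 : (P * q) ^ 2 ≤ (p * Q) ^ 2 := by
    apply pow_le_pow_left₀ (by positivity) h4
  have hsq1 : Q ^ 2 = P ^ 2 + 4 * (f w).im * a.im := aux_sq (f w) a
  have hsq2 : q ^ 2 = p ^ 2 + 4 * w.im * z.im := aux_sq w z
  rw [div_le_div_iff₀ (by positivity) (by positivity)]
  nlinarith [sq_nonneg P, sq_nonneg Q, sq_nonneg p, sq_nonneg q, hQpos, hqpos]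

/-- Julia's fundamental inequality on the upper half-plane. -/
theorem julia_inequality_halfplane
    (U : Set ℂ) (hU : IsOpen U) (hUH : {z : ℂ | 0 < z.im} ⊆ U) (h0U : (0 : ℂ) ∈ U)
    (f : ℂ → ℂ) (hf : DifferentiableOn ℂ f U)
    (hmap : ∀ z : ℂ, 0 < z.im → 0 < (f z).im)
    (hfix : f 0 = 0)
    (hnc : ¬ ∃ w : ℂ, ∀ z : ℂ, 0 < z.im → f z = w) :
    (deriv f 0).im = 0 ∧ 0 < (deriv f 0).re ∧
      ∀ z : ℂ, 0 < z.im →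
        (deriv f 0).re * (f z).im / ‖f z‖ ^ 2 ≥ z.im / ‖z‖ ^ 2 := by
  have hda : DifferentiableAt ℂ f 0 := hf.differentiableAt (hU.mem_nhds h0U)
  set c := deriv f 0 with hc_def
  have hder : HasDerivAt f c 0 := hda.hasDerivAt
  have hslope : Tendsto (fun x : ℂ => f x / x) (𝓝[≠] (0:ℂ)) (𝓝 c) := by
    have h := hasDerivAt_iff_tendsto_slope.mp hder
    apply h.congr
    intro x
    simp [slope_def_field, hfix]
  have hcont0 : ContinuousAt f 0 := hda.continuousAt
  -- main inequality
  have hmain : ∀ z : ℂ, 0 < z.im →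
      z.im / ‖z‖ ^ 2 ≤ c.re * (f z).im / ‖f z‖ ^ 2 := by
    intro z hz
    have hfz := hmap z hz
    have hfzne : f z ≠ 0 := by
      intro h; rw [h] at hfz; simp at hfz
    have habsfz : (0:ℝ) < ‖f z‖ ^ 2 :=
      pow_pos (norm_pos_iff.mpr hfzne) 2
    have hzne : z ≠ 0 := by
      intro h; rw [h] at hz; simp at hz
    have habsz : (0:ℝ) < ‖z‖ ^ 2 := pow_pos (norm_pos_iff.mpr hzne) 2
    have htI0 : Tendsto (fun t : ℝ => (I * t : ℂ)) (𝓝[>] (0:ℝ)) (𝓝 (0:ℂ)) := by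
      have hcont : Continuous fun t : ℝ => (I * t : ℂ) := by continuity
      have := hcont.tendsto 0
      simp only [Complex.ofReal_zero, mul_zero] at this
      exact this.mono_left nhdsWithin_le_nhds
    have htI : Tendsto (fun t : ℝ => (I * t : ℂ)) (𝓝[>] (0:ℝ)) (𝓝[≠] (0:ℂ)) := by
      rw [tendsto_nhdsWithin_iff]
      refine ⟨htI0, ?_⟩
      filter_upwards [self_mem_nhdsWithin] with t ht
      simp only [Set.mem_compl_iff, Set.mem_singleton_iff, mul_eq_zero, not_or]
      exact ⟨Complex.I_ne_zero, by exact_mod_cast ne_of_gt ht⟩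
    have hq : Tendsto (fun t : ℝ => f (I * t) / (I * t)) (𝓝[>] (0:ℝ)) (𝓝 c) :=
      hslope.comp htI
    have hT1 : Tendsto (fun t : ℝ => (f (I * t)).im / t) (𝓝[>] (0:ℝ)) (𝓝 c.re) := by
      have h2 := (Complex.continuous_re.tendsto c).comp hq
      apply h2.congr'
      filter_upwards [self_mem_nhdsWithin] with t ht
      have htne : (t:ℝ) ≠ 0 := ne_of_gt ht
      have htne' : (t:ℂ) ≠ 0 := by exact_mod_cast htne
      have he : f (I * t) / (I * t) = (f (I * t) * (-I)) / ((t:ℝ):ℂ) := by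
        rw [div_eq_div_iff (mul_ne_zero Complex.I_ne_zero htne') htne']
        linear_combination (f (I * (t:ℂ)) * (t:ℂ)) * Complex.I_sq
      show (f (I * t) / (I * t)).re = (f (I * t)).im / t
      rw [he, Complex.div_ofReal_re]
      congr 1
      simp [Complex.mul_re]
    -- limits of the denominators
    have hfI0 : Tendsto (fun t : ℝ => f (I * t)) (𝓝[>] (0:ℝ)) (𝓝 (0:ℂ)) := by
      have := hcont0.tendsto.comp htI0
      rwa [hfix] at this
    have hcontG : ∀ b : ℂ, Continuous fun p : ℂ => ‖p - b‖ ^ 2 := by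
      intro b
      exact (continuous_norm.comp (continuous_id.sub continuous_const)).pow 2
    have hTQ : Tendsto (fun t : ℝ => ‖f (I * t) - (starRingEnd ℂ) (f z)‖ ^ 2)
        (𝓝[>] (0:ℝ)) (𝓝 (‖f z‖ ^ 2)) := by
      have := ((hcontG ((starRingEnd ℂ) (f z))).tendsto 0).comp hfI0
      simpa [Function.comp_def] using this
    have hTq : Tendsto (fun t : ℝ => ‖(I * t : ℂ) - (starRingEnd ℂ) z‖ ^ 2)
        (𝓝[>] (0:ℝ)) (𝓝 (‖z‖ ^ 2)) := by
      have := ((hcontG ((starRingEnd ℂ) z)).tendsto 0).comp htI0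
      simpa [Function.comp_def] using this
    have hL : Tendsto (fun t : ℝ =>
        (f (I * t)).im / t * (f z).im / ‖f (I * t) - (starRingEnd ℂ) (f z)‖ ^ 2)
        (𝓝[>] (0:ℝ)) (𝓝 (c.re * (f z).im / ‖f z‖ ^ 2)) :=
      (hT1.mul tendsto_const_nhds).div hTQ (ne_of_gt habsfz)
    have hR : Tendsto (fun t : ℝ => z.im / ‖(I * t : ℂ) - (starRingEnd ℂ) z‖ ^ 2)
        (𝓝[>] (0:ℝ)) (𝓝 (z.im / ‖z‖ ^ 2)) :=
      tendsto_const_nhds.div hTq (ne_of_gt habsz)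
    refine le_of_tendsto_of_tendsto hR hL ?_
    filter_upwards [self_mem_nhdsWithin] with t ht
    have htpos : (0:ℝ) < t := ht
    have hIt : 0 < (I * (t:ℂ)).im := by simpa using htpos
    have hsp := schwarz_pick U hU hUH f hf hmap z (I * t) hz hIt
    have hItim : (I * (t:ℂ)).im = t := by simp
    rw [hItim] at hsp
    set B := ‖(I * t : ℂ) - (starRingEnd ℂ) z‖ ^ 2 with hB
    set R := ‖f (I * t) - (starRingEnd ℂ) (f z)‖ ^ 2 with hRdef
    have hBpos : 0 < B := pow_pos (norm_pos_iff.mpr (aux_ne _ z hIt hz)) 2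
    have hRpos : 0 < R := pow_pos (norm_pos_iff.mpr (aux_ne _ (f z) (hmap _ hIt) hfz)) 2
    -- hsp : t * z.im / B ≤ (f (I*t)).im * (f z).im / R
    rw [div_le_div_iff₀ hBpos hRpos] at hsp
    have hgoal : z.im / B ≤ (f (I * t)).im / t * (f z).im / R := by
      rw [div_le_div_iff₀ hBpos hRpos]
      have h2 : (f (I * t)).im / t * (f z).im * B = ((f (I * t)).im * (f z).im * B) / t := by
        ring
      rw [h2, le_div_iff₀ htpos]
      nlinarith [hsp]
    exact hgoal
  -- positivity of the derivative real part
  have hre : 0 < c.re := by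
    have h := hmain I (by simp)
    have hfi := hmap I (by simp)
    have hfine : f I ≠ 0 := by intro h'; rw [h'] at hfi; simp at hfi
    have h1 : (0:ℝ) < ‖f I‖ ^ 2 := pow_pos (norm_pos_iff.mpr hfine) 2
    simp only [Complex.I_im, Complex.norm_I] at h
    norm_num at h
    by_contra hcot
    push_neg at hcot
    have h2 : c.re * (f I).im ≤ 0 := mul_nonpos_of_nonpos_of_nonneg hcot hfi.le
    have h3 : c.re * (f I).im / ‖f I‖ ^ 2 ≤ 0 :=
      div_nonpos_of_nonpos_of_nonneg h2 h1.le
    linarith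
  have him : c.im = 0 := by
    obtain ⟨r, hrpos, hball⟩ := Metric.isOpen_iff.mp hU 0 h0U
    have hxU : ∀ x : ℝ, |x| < r → (x:ℂ) ∈ U := by
      intro x hx
      apply hball
      rw [mem_ball_zero_iff]
      simpa using hx
    have hge : ∀ x : ℝ, |x| < r → 0 ≤ (f x).im := by
      intro x hx
      have hcx : ContinuousAt f x := (hf.differentiableAt (hU.mem_nhds (hxU x hx))).continuousAt
      have h1 : Tendsto (fun ε : ℝ => ((x:ℂ) + I * ε)) (𝓝[>] (0:ℝ)) (𝓝 (x:ℂ)) := by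
        have hcont : Continuous fun ε : ℝ => ((x:ℂ) + I * ε) := by continuity
        have := hcont.tendsto 0
        simp only [Complex.ofReal_zero, mul_zero, add_zero] at this
        exact this.mono_left nhdsWithin_le_nhds
      have htend : Tendsto (fun ε : ℝ => (f ((x:ℂ) + I * ε)).im) (𝓝[>] (0:ℝ)) (𝓝 (f x).im) :=
        (Complex.continuous_im.tendsto _).comp (hcx.tendsto.comp h1)
      refine ge_of_tendsto htend ?_
      filter_upwards [self_mem_nhdsWithin] with ε hε
      refine (hmap _ ?_).le
      simpa using hε
    have hev : ∀ᶠ x : ℝ in 𝓝 (0:ℝ), |x| < r := by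
      filter_upwards [Metric.ball_mem_nhds (0:ℝ) hrpos] with x hx
      simpa [Real.dist_eq] using hx
    have hcast : ∀ s : Set ℝ, (0:ℝ) ∉ s →
        Tendsto (fun x : ℝ => (x:ℂ)) (𝓝[s] (0:ℝ)) (𝓝[≠] (0:ℂ)) := by
      intro s hs
      rw [tendsto_nhdsWithin_iff]
      constructor
      · have := Complex.continuous_ofReal.tendsto 0
        simp only [Complex.ofReal_zero] at this
        exact this.mono_left nhdsWithin_le_nhds
      · filter_upwards [self_mem_nhdsWithin] with x hx
        simp only [Set.mem_compl_iff, Set.mem_singleton_iff, Complex.ofReal_eq_zero]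
        rintro rfl
        exact hs hx
    have hslopeim : ∀ s : Set ℝ, (0:ℝ) ∉ s →
        Tendsto (fun x : ℝ => (f x / (x:ℂ)).im) (𝓝[s] (0:ℝ)) (𝓝 c.im) := by
      intro s hs
      exact (Complex.continuous_im.tendsto c).comp (hslope.comp (hcast s hs))
    have hpos : 0 ≤ c.im := by
      refine ge_of_tendsto (hslopeim (Set.Ioi 0) (by simp)) ?_
      filter_upwards [self_mem_nhdsWithin, nhdsWithin_le_nhds hev] with x hx hxr
      rw [Complex.div_ofReal_im]
      exact div_nonneg (hge x hxr) (le_of_lt hx)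
    have hneg : c.im ≤ 0 := by
      refine le_of_tendsto (hslopeim (Set.Iio 0) (by simp)) ?_
      filter_upwards [self_mem_nhdsWithin, nhdsWithin_le_nhds hev] with x hx hxr
      rw [Complex.div_ofReal_im]
      exact div_nonpos_of_nonneg_of_nonpos (hge x hxr) (le_of_lt hx)
    linarith
  exact ⟨him, hre, fun z hz => hmain z hz⟩
end

section
/- (Julia's inequality, sequential form) Let f be holomorphic on the upper half-plane ℍ with f(z) ∈ ℍ for all z ∈ ℍ. Suppose there is a sequence (ζₙ) of points of ℍ with ζₙ → 0, f(ζₙ) → 0, and the ratios Im(f(ζₙ))/Im(ζₙ) bounded above; let β ≥ 0 be the limit inferior of Im(f(ζₙ))/Im(ζₙ). Then for every z ∈ ℍ: β · Im(f(z))/|f(z)|² ≥ Im(z)/|z|². -/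
open Complex Filter Metric Set

lemma im_sub_conj_pos {p q : ℂ} (hp : 0 < p.im) (hq : 0 < q.im) :
    0 < (p - (starRingEnd ℂ) q).im := by
  simp only [Complex.sub_im, Complex.conj_im]; linarith

lemma sub_conj_ne {p q : ℂ} (hp : 0 < p.im) (hq : 0 < q.im) :
    p - (starRingEnd ℂ) q ≠ 0 := by
  intro h
  have := im_sub_conj_pos hp hq
  rw [h] at this; simp at this

lemma normSq_sub_conj (p q : ℂ) :
    normSq (p - (starRingEnd ℂ) q) = normSq (p - q) + 4 * p.im * q.im := by
  simp only [normSq_apply, Complex.sub_re, Complex.sub_im, Complex.conj_re, Complex.conj_im]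
  ring

lemma normSq_sub_lt {p q : ℂ} (hp : 0 < p.im) (hq : 0 < q.im) :
    normSq (p - q) < normSq (p - (starRingEnd ℂ) q) := by
  rw [normSq_sub_conj]; nlinarith

lemma mobius_im {w ζ : ℂ} (hw : 0 < w.im) (hζ : ‖ζ‖ < 1) :
    0 < (((starRingEnd ℂ) w * ζ - w) / (ζ - 1)).im := by
  have h1 : ζ - 1 ≠ 0 := by
    intro h
    have : ζ = 1 := by linear_combination h
    simp [this] at hζ
  have hns : normSq (ζ - 1) ≠ 0 := by simpa [normSq_eq_zero] using h1
  have key : (((starRingEnd ℂ) w * ζ - w) / (ζ - 1)).im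
      = w.im * (1 - normSq ζ) / normSq (ζ - 1) := by
    rw [Complex.div_im]
    field_simp
    simp only [normSq_apply, Complex.sub_re, Complex.sub_im, Complex.mul_re, Complex.mul_im,
      Complex.conj_re, Complex.conj_im, Complex.one_re, Complex.one_im]
    ring
  rw [key]
  have h2 : normSq ζ < 1 := by
    have := Complex.sq_norm ζ
    nlinarith [norm_nonneg ζ]
  have h3 : 0 < normSq (ζ - 1) := lt_of_le_of_ne (normSq_nonneg _) (Ne.symm hns)
  have h4 : 0 < 1 - normSq ζ := by linarith
  positivity

theorem schwarz_pick_half (f : ℂ → ℂ) (hf : DifferentiableOn ℂ f {z : ℂ | 0 < z.im})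
    (hmap : ∀ z : ℂ, 0 < z.im → 0 < (f z).im) {z w : ℂ} (hz : 0 < z.im) (hw : 0 < w.im) :
    ‖(f z - f w) / (f z - (starRingEnd ℂ) (f w))‖
      ≤ ‖(z - w) / (z - (starRingEnd ℂ) w)‖ := by
  set u : ℂ → ℂ := fun ζ => ((starRingEnd ℂ) w * ζ - w) / (ζ - 1) with hu
  set g : ℂ → ℂ := fun ζ => (f (u ζ) - f w) / (f (u ζ) - (starRingEnd ℂ) (f w)) with hg
  have huim : ∀ ζ ∈ ball (0 : ℂ) 1, 0 < (u ζ).im := by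
    intro ζ hζ
    exact mobius_im hw (by simpa [mem_ball, dist_eq] using hζ)
  have hone : ∀ ζ ∈ ball (0 : ℂ) 1, ζ - 1 ≠ 0 := by
    intro ζ hζ h
    have : ζ = 1 := by linear_combination h
    simp [this, mem_ball, dist_eq] at hζ
  have hudiff : DifferentiableOn ℂ u (ball 0 1) := by
    apply DifferentiableOn.div
    · exact (differentiable_const _ |>.mul differentiable_id |>.sub (differentiable_const _)).differentiableOn
    · exact (differentiable_id.sub (differentiable_const _)).differentiableOn
    · exact hone
  have hfu : DifferentiableOn ℂ (fun ζ => f (u ζ)) (ball 0 1) :=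
    hf.comp hudiff fun ζ hζ => huim ζ hζ
  have hden : ∀ ζ ∈ ball (0 : ℂ) 1, f (u ζ) - (starRingEnd ℂ) (f w) ≠ 0 := by
    intro ζ hζ
    exact sub_conj_ne (hmap _ (huim ζ hζ)) (hmap w hw)
  have hgdiff : DifferentiableOn ℂ g (ball 0 1) := by
    apply DifferentiableOn.div
    · exact hfu.sub (differentiableOn_const _)
    · exact hfu.sub (differentiableOn_const _)
    · exact hden
  have habslt : ∀ {p q : ℂ}, 0 < p.im → 0 < q.im →
      ‖(p - q) / (p - (starRingEnd ℂ) q)‖ < 1 := by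
    intro p q hp hq
    rw [norm_div, div_lt_one (norm_pos_iff.2 (sub_conj_ne hp hq))]
    have h2 := normSq_sub_lt hp hq
    rw [← Complex.sq_norm, ← Complex.sq_norm] at h2
    exact lt_of_pow_lt_pow_left₀ 2 (norm_nonneg _) h2
  have hmaps : MapsTo g (ball 0 1) (ball 0 1) := by
    intro ζ hζ
    simp only [mem_ball, dist_eq, sub_zero, hg]
    exact habslt (hmap _ (huim ζ hζ)) (hmap w hw)
  have hg0 : g 0 = 0 := by
    have : u 0 = w := by simp [hu]
    simp [hg, this]
  -- the point φ z
  have hdzw : z - (starRingEnd ℂ) w ≠ 0 := sub_conj_ne hz hw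
  have hφ : ‖(z - w) / (z - (starRingEnd ℂ) w)‖ < 1 := habslt hz hw
  have hcw : (starRingEnd ℂ) w - w ≠ 0 := by
    intro h
    have : ((starRingEnd ℂ) w - w).im = 0 := by rw [h]; simp
    simp only [Complex.sub_im, Complex.conj_im] at this
    linarith
  have hkey : u ((z - w) / (z - (starRingEnd ℂ) w)) = z := by
    simp only [hu]
    rw [div_sub_one hdzw]
    have hnum : z - w - (z - (starRingEnd ℂ) w) ≠ 0 := by
      intro h; apply hcw; linear_combination h
    field_simp
    ring
  have := norm_le_norm_of_mapsTo_ball hgdiff (hmaps.mono_right ball_subset_closedBall) hg0 hφ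
  simp only [hg, hkey] at this
  exact this

theorem julia_step (f : ℂ → ℂ) (hf : DifferentiableOn ℂ f {z : ℂ | 0 < z.im})
    (hmap : ∀ z : ℂ, 0 < z.im → 0 < (f z).im) {z w : ℂ} (hz : 0 < z.im) (hw : 0 < w.im) :
    z.im * w.im / normSq (z - (starRingEnd ℂ) w)
      ≤ (f z).im * (f w).im / normSq (f z - (starRingEnd ℂ) (f w)) := by
  have hfz := hmap z hz
  have hfw := hmap w hw
  have hA' : 0 < normSq (f z - (starRingEnd ℂ) (f w)) :=
    normSq_pos.2 (sub_conj_ne hfz hfw)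
  have hB' : 0 < normSq (z - (starRingEnd ℂ) w) := normSq_pos.2 (sub_conj_ne hz hw)
  have hsp := schwarz_pick_half f hf hmap hz hw
  rw [norm_div, norm_div,
    div_le_div_iff₀ (norm_pos_iff.2 (sub_conj_ne hfz hfw))
      (norm_pos_iff.2 (sub_conj_ne hz hw))] at hsp
  have h2 : normSq (f z - f w) * normSq (z - (starRingEnd ℂ) w)
      ≤ normSq (z - w) * normSq (f z - (starRingEnd ℂ) (f w)) := by
    have h3 := pow_le_pow_left₀
      (mul_nonneg (norm_nonneg _) (norm_nonneg _)) hsp 2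
    simpa only [mul_pow, Complex.sq_norm] using h3
  rw [div_le_div_iff₀ hB' hA']
  have eA := normSq_sub_conj (f z) (f w)
  have eB := normSq_sub_conj z w
  nlinarith [h2, eA, eB, normSq_nonneg (f z - f w), normSq_nonneg (z - w)]

/-- Julia's inequality in sequential form, with no boundary regularity assumed. -/
theorem julia_inequality_sequential
    (f : ℂ → ℂ) (hf : DifferentiableOn ℂ f {z : ℂ | 0 < z.im})
    (hmap : ∀ z : ℂ, 0 < z.im → 0 < (f z).im)
    (ζ : ℕ → ℂ) (hζH : ∀ n, 0 < (ζ n).im)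
    (hζ0 : Tendsto ζ atTop (nhds 0))
    (hfζ0 : Tendsto (fun n => f (ζ n)) atTop (nhds 0))
    (hbd : ∃ M : ℝ, ∀ n, (f (ζ n)).im / (ζ n).im ≤ M)
    (β : ℝ) (hβ0 : 0 ≤ β)
    (hβ : β = atTop.liminf (fun n => (f (ζ n)).im / (ζ n).im)) :
    ∀ z : ℂ, 0 < z.im →
      β * (f z).im / ‖f z‖ ^ 2 ≥ z.im / ‖z‖ ^ 2 := by
  intro z hz
  have hfz := hmap z hz
  have hz0 : z ≠ 0 := fun h => by simp [h] at hz
  have hfz0' : f z ≠ 0 := fun h => by simp [h] at hfz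
  set r : ℕ → ℝ := fun n => (f (ζ n)).im / (ζ n).im with hr
  set c : ℝ := (f z).im / normSq (f z) with hc
  set cseq : ℕ → ℝ := fun n => (f z).im / normSq (f z - (starRingEnd ℂ) (f (ζ n))) with hcseq
  set Rseq : ℕ → ℝ := fun n => z.im / normSq (z - (starRingEnd ℂ) (ζ n)) with hRseq
  -- pointwise inequality
  have hstep : ∀ n, Rseq n ≤ r n * cseq n := by
    intro n
    have h := julia_step f hf hmap hz (hζH n)
    have hζn := hζH n
    have hA' : 0 < normSq (f z - (starRingEnd ℂ) (f (ζ n))) :=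
      normSq_pos.2 (sub_conj_ne hfz (hmap _ hζn))
    have hB' : 0 < normSq (z - (starRingEnd ℂ) (ζ n)) := normSq_pos.2 (sub_conj_ne hz hζn)
    simp only [hRseq, hr, hcseq]
    rw [div_mul_div_comm, div_le_div_iff₀ hB' (by positivity)]
    rw [div_le_div_iff₀ hB' hA'] at h
    linear_combination h
  -- limits
  have hfzn : normSq (f z) ≠ 0 := (normSq_pos.2 hfz0').ne'
  have hzn : normSq z ≠ 0 := (normSq_pos.2 hz0).ne'
  have htc : Tendsto cseq atTop (nhds c) := by
    have h1 : Tendsto (fun n => f z - (starRingEnd ℂ) (f (ζ n))) atTop (nhds (f z)) := by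
      have := (Complex.continuous_conj.tendsto 0).comp hfζ0
      simpa using tendsto_const_nhds.sub this
    have h2 : Tendsto (fun n => normSq (f z - (starRingEnd ℂ) (f (ζ n)))) atTop
        (nhds (normSq (f z))) := (Complex.continuous_normSq.tendsto _).comp h1
    exact tendsto_const_nhds.div h2 hfzn
  have htR : Tendsto Rseq atTop (nhds (z.im / normSq z)) := by
    have h1 : Tendsto (fun n => z - (starRingEnd ℂ) (ζ n)) atTop (nhds z) := by
      have := (Complex.continuous_conj.tendsto 0).comp hζ0
      simpa using tendsto_const_nhds.sub this
    exact tendsto_const_nhds.div ((Complex.continuous_normSq.tendsto _).comp h1) hzn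
  have hr0 : ∀ n, 0 ≤ r n := fun n => div_nonneg (hmap _ (hζH n)).le (hζH n).le
  have hcseq0 : ∀ n, 0 ≤ cseq n := fun n => div_nonneg hfz.le (normSq_nonneg _)
  -- main estimate
  have key : ∀ ε : ℝ, 0 < ε → z.im / normSq z ≤ (β + ε) * (c + ε) + ε := by
    intro ε hε
    obtain ⟨M, hM⟩ := hbd
    have hcb : atTop.IsCoboundedUnder (· ≥ ·) r :=
      isCoboundedUnder_ge_of_eventually_le atTop (Eventually.of_forall hM)
    have hfreq : ∃ᶠ n in atTop, r n < β + ε :=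
      frequently_lt_of_liminf_lt hcb (by rw [← hβ]; linarith)
    have hev1 : ∀ᶠ n in atTop, cseq n < c + ε := htc.eventually_lt_const (by linarith)
    have hev2 : ∀ᶠ n in atTop, z.im / normSq z - ε < Rseq n :=
      htR.eventually_const_lt (by linarith)
    obtain ⟨n, hn1, hn2, hn3⟩ := (hfreq.and_eventually (hev1.and hev2)).exists
    have h3 : Rseq n ≤ r n * cseq n := hstep n
    have h4 : r n * cseq n ≤ (β + ε) * (c + ε) :=
      mul_le_mul hn1.le hn2.le (hcseq0 n) (by linarith)
    linarith
  -- conclude by letting ε → 0⁺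
  have hconv : Tendsto (fun ε : ℝ => (β + ε) * (c + ε) + ε)
      (nhdsWithin 0 (Set.Ioi 0)) (nhds (β * c)) := by
    have hcont : Continuous fun ε : ℝ => (β + ε) * (c + ε) + ε := by continuity
    have h5 := hcont.tendsto 0
    simp only [add_zero] at h5
    exact h5.mono_left nhdsWithin_le_nhds
  have hfin := ge_of_tendsto hconv
    (eventually_nhdsWithin_of_forall fun ε hε => key ε hε)
  rw [ge_iff_le, Complex.sq_norm, Complex.sq_norm, mul_div_assoc]
  exact hfin
end

section
/- (Jack's lemma / theorem after Julia) Let f be holomorphic on an open neighborhood of the closed unit disk, not identically 0, with |f(z)| ≤ 1 for all z in the closed unit disk and f(0) = 0. If the maximum of |f| over the closed unit disk is attained at the boundary point α (with |α| = 1), then α·f'(α)/f(α) is a real number greater than or equal to 1. -/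
open Complex Metric

lemma hasDerivAt_normSq_comp {g : ℝ → ℂ} {g' : ℂ} {t : ℝ} (h : HasDerivAt g g' t) :
    HasDerivAt (fun s => Complex.normSq (g s)) (2 * ((starRingEnd ℂ) (g t) * g').re) t := by
  have hre : HasDerivAt (fun s => (g s).re) g'.re t :=
    (Complex.reCLM.hasFDerivAt.comp_hasDerivAt t h)
  have him : HasDerivAt (fun s => (g s).im) g'.im t :=
    (Complex.imCLM.hasFDerivAt.comp_hasDerivAt t h)
  have h2 : HasDerivAt (fun s => (g s).re * (g s).re + (g s).im * (g s).im)
      (g'.re * (g t).re + (g t).re * g'.re + (g'.im * (g t).im + (g t).im * g'.im)) t :=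
    (hre.mul hre).add (him.mul him)
  convert h2 using 1
  · ext s; exact Complex.normSq_apply (g s)
  simp [Complex.mul_re, Complex.conj_re, Complex.conj_im]; ring

/-- Jack's lemma (theorem after Julia). -/
theorem jack_lemma
    (U : Set ℂ) (hU : IsOpen U) (hUc : closedBall (0 : ℂ) 1 ⊆ U)
    (f : ℂ → ℂ) (hf : DifferentiableOn ℂ f U)
    (hmap : ∀ z ∈ closedBall (0 : ℂ) 1, ‖f z‖ ≤ 1)
    (hfix : f 0 = 0)
    (hne : ∃ z ∈ closedBall (0 : ℂ) 1, f z ≠ 0)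
    (α : ℂ) (hα : ‖α‖ = 1)
    (hmax : ∀ z ∈ closedBall (0 : ℂ) 1, ‖f z‖ ≤ ‖f α‖) :
    (α * deriv f α / f α).im = 0 ∧ 1 ≤ (α * deriv f α / f α).re := by
  set M := ‖f α‖ with hMdef
  have hαmem : α ∈ closedBall (0 : ℂ) 1 := by
    simp [mem_closedBall, Complex.dist_eq, hα]
  have hM : 0 < M := by
    obtain ⟨z, hz, hzne⟩ := hne
    exact lt_of_lt_of_le (by simpa using hzne) (hmax z hz)
  have hw : f α ≠ 0 := fun h => by simp [hMdef, h] at hM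
  have hdiff : ∀ z ∈ closedBall (0 : ℂ) 1, DifferentiableAt ℂ f z := fun z hz =>
    hf.differentiableAt (hU.mem_nhds (hUc hz))
  have hder : HasDerivAt f (deriv f α) α := (hdiff α hαmem).hasDerivAt
  set w := f α
  set D := α * deriv f α / w with hDdef
  have key : (starRingEnd ℂ) w * (α * deriv f α) = (Complex.normSq w : ℂ) * D := by
    rw [hDdef, ← Complex.mul_conj]
    field_simp
  have hnsq : Complex.normSq w = M ^ 2 := by
    rw [Complex.normSq_eq_norm_sq]
  have hn0 : 0 < Complex.normSq w := by rw [hnsq]; positivity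
  -- Part A : imaginary part vanishes
  have partA : ((starRingEnd ℂ) w * (α * deriv f α)).im = 0 := by
    set c : ℝ → ℂ := fun t => α * Complex.exp (t * I) with hc
    have hc0 : c 0 = α := by simp [hc]
    have hcd : HasDerivAt c (α * I) 0 := by
      have h1 : HasDerivAt (fun t : ℝ => (t : ℂ)) 1 0 := by
        exact Complex.ofRealCLM.hasDerivAt (x := (0 : ℝ))
      have h2 : HasDerivAt (fun t : ℝ => (t : ℂ) * I) I 0 := by simpa using h1.mul_const I
      have h3 : HasDerivAt (fun t : ℝ => Complex.exp ((t : ℂ) * I)) I 0 := by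
        simpa using h2.cexp
      simpa using h3.const_mul α
    have hfc : HasDerivAt (fun t : ℝ => f (c t)) (deriv f α * (α * I)) 0 := by
      have := HasDerivAt.comp (h₂ := f) (h := c) 0 (by rwa [hc0]) hcd
      exact this
    have hns := hasDerivAt_normSq_comp hfc
    have hmaxloc : IsLocalMax (fun t : ℝ => Complex.normSq (f (c t))) 0 := by
      apply Filter.Eventually.of_forall
      intro t
      have hct : c t ∈ closedBall (0 : ℂ) 1 := by
        simp [hc, mem_closedBall, Complex.dist_eq, norm_mul, hα, Complex.norm_exp_ofReal_mul_I]
      have := hmax (c t) hct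
      simp only [hc0]
      rw [Complex.normSq_eq_norm_sq, Complex.normSq_eq_norm_sq]
      exact pow_le_pow_left₀ (norm_nonneg _) this 2
    have hzero := hmaxloc.hasDerivAt_eq_zero hns
    rw [hc0] at hzero
    have hre0 : ((starRingEnd ℂ) w * (deriv f α * (α * I))).re = 0 := by linarith
    have heq : (starRingEnd ℂ) w * (deriv f α * (α * I)) =
        ((starRingEnd ℂ) w * (α * deriv f α)) * I := by ring
    rw [heq, Complex.mul_I_re] at hre0
    linarith
  -- Part B : real part bound
  have partB : Complex.normSq w ≤ ((starRingEnd ℂ) w * (α * deriv f α)).re := by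
    have hd1 : DifferentiableOn ℂ f (ball (0:ℂ) 1) := fun z hz =>
      ((hdiff z (ball_subset_closedBall hz)).differentiableWithinAt)
    have hschwarz : ∀ r : ℝ, 0 ≤ r → r < 1 → ‖f (r * α)‖ ≤ r * M := by
      intro r hr0 hr1
      have habs : ‖(r : ℂ) * α‖ = r := by
        rw [norm_mul, Complex.norm_of_nonneg hr0, hα, mul_one]
      have hmem : (r : ℂ) * α ∈ ball (0 : ℂ) 1 :=
        mem_ball_zero_iff.mpr (by rw [habs]; exact hr1)
      refine le_of_forall_pos_le_add ?_
      intro ε hε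
      have hmaps : Set.MapsTo f (ball (0:ℂ) 1) (ball (f 0) (M + ε)) := by
        intro z hz
        have : ‖f z‖ ≤ M := hmax z (ball_subset_closedBall hz)
        simp only [hfix, mem_ball, Complex.dist_eq, sub_zero]
        linarith
      have := Complex.dist_le_div_mul_dist_of_mapsTo_ball hd1 (hmaps.mono_right ball_subset_closedBall) hmem
      rw [hfix] at this
      simp only [Complex.dist_eq, sub_zero, div_one, habs] at this
      calc ‖f ((r:ℂ) * α)‖ ≤ (M + ε) * r := this
        _ = r * M + ε * r := by ring
        _ ≤ r * M + ε := by nlinarith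
    set c : ℝ → ℂ := fun r => (r : ℂ) * α with hc
    have hc1 : c 1 = α := by simp [hc]
    have hcd : HasDerivAt c α 1 := by
      have h1 : HasDerivAt (fun r : ℝ => (r : ℂ)) 1 1 := by
        exact Complex.ofRealCLM.hasDerivAt (x := (1 : ℝ))
      simpa using h1.mul_const α
    have hfc : HasDerivAt (fun r : ℝ => f (c r)) (deriv f α * α) 1 := by
      have := HasDerivAt.comp (h₂ := f) (h := c) 1 (by rwa [hc1]) hcd
      exact this
    have hns := hasDerivAt_normSq_comp hfc
    rw [hc1] at hns
    set ψ : ℝ → ℝ := fun r => Complex.normSq (f (c r)) with hψ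
    set d : ℝ := 2 * ((starRingEnd ℂ) w * (deriv f α * α)).re with hd
    have hψ1 : ψ 1 = Complex.normSq w := by simp [hψ, hc1]; rfl
    have hslope : Filter.Tendsto (slope ψ 1) (nhdsWithin 1 (Set.Iio 1)) (nhds d) :=
      (hasDerivAt_iff_tendsto_slope.mp hns).mono_left
        (nhdsWithin_mono 1 (fun x hx => ne_of_lt hx))
    have hineq : ∀ᶠ r in nhdsWithin 1 (Set.Iio (1:ℝ)), (r + 1) * ψ 1 ≤ slope ψ 1 r := by
      filter_upwards [Ioo_mem_nhdsLT_of_mem (Set.mem_Ioc.mpr ⟨zero_lt_one, le_refl (1:ℝ)⟩)]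
      intro r hr
      obtain ⟨hr0, hr1⟩ := hr
      have hψr : ψ r ≤ r ^ 2 * ψ 1 := by
        have h1 := hschwarz r hr0.le hr1
        have h2 : ‖f ((r:ℂ) * α)‖ ^ 2 ≤ (r * M) ^ 2 :=
          pow_le_pow_left₀ (norm_nonneg _) h1 2
        rw [hψ1, hnsq]
        simp only [hψ, hc]
        rw [Complex.normSq_eq_norm_sq]
        nlinarith
      rw [slope_def_field, le_div_iff_of_neg (by linarith : r - (1:ℝ) < 0)]
      nlinarith
    have htend2 : Filter.Tendsto (fun r : ℝ => (r + 1) * ψ 1)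
        (nhdsWithin 1 (Set.Iio 1)) (nhds (2 * ψ 1)) := by
      have hcont : ContinuousAt (fun r : ℝ => (r + 1) * ψ 1) 1 := by fun_prop
      have := hcont.tendsto.mono_left (nhdsWithin_le_nhds (s := Set.Iio (1:ℝ)))
      simpa [two_mul, add_mul] using this
    have hfin : 2 * ψ 1 ≤ d := le_of_tendsto_of_tendsto htend2 hslope hineq
    rw [hψ1] at hfin
    have hcomm : (starRingEnd ℂ) w * (deriv f α * α) =
        (starRingEnd ℂ) w * (α * deriv f α) := by ring
    rw [hd, hcomm] at hfin
    linarith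
  constructor
  · have h1 := partA
    rw [key] at h1
    simp only [Complex.mul_im, Complex.ofReal_re, Complex.ofReal_im, zero_mul, add_zero] at h1
    exact (mul_eq_zero.mp h1).resolve_left (ne_of_gt hn0)
  · have h1 := partB
    rw [key] at h1
    simp only [Complex.mul_re, Complex.ofReal_re, Complex.ofReal_im, zero_mul, sub_zero] at h1
    have := le_of_mul_le_mul_left (by linarith : Complex.normSq w * 1 ≤ Complex.normSq w * D.re) hn0
    linarith
end

section
/- (Unkelbach's refinement) Let f be holomorphic on an open set containing the open unit disk 𝔻 and the point 1, with |f(z)| < 1 for all z ∈ 𝔻, f(0) = 0, f(1) = 1, and f not constant. Then f'(1) is a real number and f'(1) ≥ 2/(1 + |f'(0)|). -/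
open Complex Metric Filter Set Topology

private lemma unkelbach_mobius_normSq (a w : ℂ) :
    normSq (1 - (starRingEnd ℂ) a * w) - normSq (w - a) = (1 - normSq a) * (1 - normSq w) := by
  simp only [normSq_apply, Complex.sub_re, Complex.sub_im, Complex.mul_re, Complex.mul_im,
    Complex.conj_re, Complex.conj_im, Complex.one_re, Complex.one_im]
  ring

private lemma unkelbach_quad_bound {m r t s : ℝ} (hm0 : 0 ≤ m) (hm1 : m ≤ 1) (hr0 : 0 < r)
    (hr1 : r < 1) (ht0 : 0 ≤ t) (ht1 : t ≤ 1) (hs : s ≤ m * t)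
    (hQ : t ^ 2 - 2 * s + m ^ 2 ≤ r ^ 2 * (1 + m ^ 2 * t ^ 2 - 2 * s)) :
    t * (1 + m * r) ≤ m + r := by
  have hQ' : t ^ 2 * (1 - r ^ 2 * m ^ 2) - 2 * m * t * (1 - r ^ 2) - (r ^ 2 - m ^ 2) ≤ 0 := by
    nlinarith [mul_nonneg (sub_nonneg.2 hs) (by nlinarith : (0:ℝ) ≤ 1 - r ^ 2)]
  rcases le_or_gt (t * (1 - m * r) + (r - m)) 0 with hY | hY
  · nlinarith [mul_nonneg (mul_nonneg (sub_nonneg.2 ht1) hm0) hr0.le]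
  · nlinarith [mul_pos hY (show (0:ℝ) < 1 from one_pos)]

/-- Unkelbach's refinement of the boundary Schwarz lemma. -/
theorem unkelbach_refinement
    (U : Set ℂ) (hU : IsOpen U) (hUD : ball (0 : ℂ) 1 ⊆ U) (h1U : (1 : ℂ) ∈ U)
    (f : ℂ → ℂ) (hf : DifferentiableOn ℂ f U)
    (hmap : ∀ z ∈ ball (0 : ℂ) 1, ‖f z‖ < 1)
    (hfix0 : f 0 = 0) (hfix1 : f 1 = 1)
    (hnc : ¬ ∃ w : ℂ, ∀ z ∈ ball (0 : ℂ) 1, f z = w) :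
    (deriv f 1).im = 0 ∧
      (deriv f 1).re ≥ 2 / (1 + ‖deriv f 0‖) := by
  set g := dslope f 0 with hg
  have h0U : (0 : ℂ) ∈ U := hUD (mem_ball_self one_pos)
  have hf1 : DifferentiableAt ℂ f 1 := hf.differentiableAt (hU.mem_nhds h1U)
  have hg1d : DifferentiableAt ℂ g 1 := (differentiableAt_dslope_of_ne one_ne_zero).mpr hf1
  have hg0d : DifferentiableAt ℂ g 0 := by
    obtain ⟨p, hp⟩ := hf.analyticAt (hU.mem_nhds h0U)
    exact hp.has_fpower_series_dslope_fslope.analyticAt.differentiableAt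
  have hgb : DifferentiableOn ℂ g (ball (0:ℂ) 1) := by
    intro z hz
    rcases eq_or_ne z 0 with rfl | hz0
    · exact hg0d.differentiableWithinAt
    · exact (differentiableWithinAt_dslope_of_ne hz0).mpr ((hf.mono hUD) z hz)
  have hmapsf : MapsTo f (ball (0:ℂ) 1) (ball (f 0) 1) := by
    intro z hz
    rw [hfix0, mem_ball_zero_iff]
    exact hmap z hz
  have hg_le : ∀ z ∈ ball (0:ℂ) 1, ‖g z‖ ≤ 1 := by
    intro z hz
    simpa using norm_dslope_le_div_of_mapsTo_ball (hf.mono hUD) (hmapsf.mono_right ball_subset_closedBall) hz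
  have hg1 : g 1 = 1 := by
    rw [hg, dslope_of_ne f one_ne_zero]
    simp [slope, hfix0, hfix1]
  have hfeq : ∀ z : ℂ, f z = z * g z := by
    intro z
    have := sub_smul_dslope f 0 z
    rw [hfix0, sub_zero, sub_zero, smul_eq_mul] at this
    exact this.symm
  have hderiv0 : deriv f 0 = g 0 := (dslope_same f 0).symm
  set a : ℂ := g 0 with ha
  set m : ℝ := ‖a‖ with hm
  have hm0 : (0:ℝ) ≤ m := norm_nonneg a
  have hm1 : m ≤ 1 := hg_le 0 (mem_ball_self one_pos)
  have h1m : (0:ℝ) < 1 + m := by linarith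
  -- deriv f 1 = 1 + deriv g 1
  have hderiv1 : deriv f 1 = 1 + deriv g 1 := by
    have h : HasDerivAt f (1 * g 1 + 1 * deriv g 1) 1 := by
      have := (hasDerivAt_id' (1:ℂ)).mul hg1d.hasDerivAt
      simpa [funext hfeq, Pi.mul_def] using this
    rw [h.deriv, hg1]; ring
  -- boundary bound
  have hb : ∀ p : ℂ, p ∈ U → ‖p‖ = 1 → ‖f p‖ ≤ 1 := by
    intro p hpU hp1
    have hpc : p ∈ closure (ball (0:ℂ) 1) := by
      rw [closure_ball (0:ℂ) one_ne_zero, mem_closedBall_zero_iff]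
      simp [hp1]
    have hne : (𝓝[ball (0:ℂ) 1] p).NeBot := mem_closure_iff_nhdsWithin_neBot.mp hpc
    have hcf : ContinuousAt f p := (hf.differentiableAt (hU.mem_nhds hpU)).continuousAt
    have ht : Tendsto (fun z => ‖f z‖) (𝓝[ball (0:ℂ) 1] p)
        (𝓝 (‖f p‖)) :=
      (continuous_norm.continuousAt.comp hcf).continuousWithinAt.tendsto
    exact le_of_tendsto ht (eventually_mem_nhdsWithin.mono fun z hz => (hmap z hz).le)
  -- imaginary part
  have hIm : (deriv f 1).im = 0 := by
    set c : ℝ → ℂ := fun θ => Complex.exp (↑θ * I) with hc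
    have hcd : HasDerivAt c I 0 := by
      have h1 : HasDerivAt (fun θ : ℝ => (↑θ * I : ℂ)) I 0 := by
        simpa using (Complex.ofRealCLM.hasDerivAt (x := (0:ℝ))).mul_const I
      have h2 : HasDerivAt Complex.exp (Complex.exp ((0:ℝ) * I)) ((0:ℝ) * I) :=
        Complex.hasDerivAt_exp _
      have := HasDerivAt.scomp (0:ℝ) h2 h1
      simpa [Function.comp_def, hc] using this
    set F : ℝ → ℂ := fun θ => f (c θ) with hF
    have hc0 : c 0 = 1 := by simp [hc]
    have hFd : HasDerivAt F (I * deriv f 1) 0 := by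
      have := HasDerivAt.scomp (0:ℝ) (hc0 ▸ hf1.hasDerivAt) hcd
      simpa [hF, hc0, Function.comp_def, smul_eq_mul] using this
    have hre : HasDerivAt (fun θ => (F θ).re) ((I * deriv f 1).re) 0 :=
      (Complex.reCLM.hasFDerivAt.comp_hasDerivAt 0 hFd)
    have him : HasDerivAt (fun θ => (F θ).im) ((I * deriv f 1).im) 0 :=
      (Complex.imCLM.hasFDerivAt.comp_hasDerivAt 0 hFd)
    set ψ : ℝ → ℝ := fun θ => (F θ).re * (F θ).re + (F θ).im * (F θ).im with hψ
    have hψd : HasDerivAt ψ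
        ((I * deriv f 1).re * (F 0).re + (F 0).re * (I * deriv f 1).re
          + ((I * deriv f 1).im * (F 0).im + (F 0).im * (I * deriv f 1).im)) 0 :=
      (hre.mul hre).add (him.mul him)
    have hF0 : F 0 = 1 := by simp [hF, hc0, hfix1]
    have hmax : IsLocalMax ψ 0 := by
      have hev : ∀ᶠ θ : ℝ in 𝓝 0, c θ ∈ U := by
        have hcc : ContinuousAt c 0 := hcd.continuousAt
        exact hcc (hc0 ▸ hU.mem_nhds h1U)
      refine hev.mono fun θ hθ => ?_
      have h1 : ‖f (c θ)‖ ≤ 1 := hb _ hθ (by simp [hc, Complex.norm_exp_ofReal_mul_I])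
      have h2 : ψ θ = ‖f (c θ)‖ ^ 2 := by
        rw [hψ]; simp [hF, ← Complex.normSq_apply, Complex.sq_norm]
      have h3 : ψ 0 = 1 := by simp [hψ, hF0]
      rw [h2, h3]
      nlinarith [norm_nonneg (f (c θ))]
    have h0 : deriv ψ 0 = 0 := hmax.deriv_eq_zero
    rw [hψd.deriv] at h0
    rw [hF0] at h0
    simp [Complex.mul_re, Complex.mul_im] at h0
    linarith [h0]
  refine ⟨hIm, ?_⟩
  -- Schwarz–Pick bound
  have habs : ∀ r : ℝ, r ∈ Ioo (0:ℝ) 1 →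
      ‖g r‖ * (1 + m * r) ≤ m + r := by
    intro r hr
    obtain ⟨hr0, hr1⟩ := hr
    have hrb : (↑r : ℂ) ∈ ball (0:ℂ) 1 := by
      rw [mem_ball_zero_iff]
      simpa [Complex.norm_real, abs_of_pos hr0] using hr1
    have ht1 : ‖g r‖ ≤ 1 := hg_le _ hrb
    rcases eq_or_lt_of_le hm1 with hme | hmlt
    · nlinarith [norm_nonneg (g (r:ℂ)), mul_nonneg (sub_nonneg.2 ht1) hr0.le]
    · have hglt : ∀ z ∈ ball (0:ℂ) 1, ‖g z‖ < 1 := by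
        intro z hz
        rcases lt_or_eq_of_le (hg_le z hz) with h | h
        · exact h
        · exfalso
          have hmaxz : IsMaxOn (norm ∘ g) (ball (0:ℂ) 1) z := by
            intro y hy
            simp only [Function.comp_apply]
            rw [h]; exact hg_le y hy
          have := Complex.eqOn_of_isPreconnected_of_isMaxOn_norm
            (convex_ball (0:ℂ) 1).isPreconnected isOpen_ball hgb hz hmaxz
          have h0 : g 0 = g z := this (mem_ball_self one_pos)
          rw [← ha] at h0
          rw [← h0] at h
          exact absurd h.symm (ne_of_gt hmlt)
      have hden : ∀ z ∈ ball (0:ℂ) 1, (1 : ℂ) - (starRingEnd ℂ) a * g z ≠ 0 := by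
        intro z hz h
        have : ‖(starRingEnd ℂ) a * g z‖ < 1 := by
          rw [norm_mul, Complex.norm_conj]
          calc m * ‖g z‖ ≤ m * 1 :=
                mul_le_mul_of_nonneg_left (hg_le z hz) hm0
            _ < 1 := by linarith
        rw [sub_eq_zero] at h
        rw [← h] at this
        simp at this
      set φ : ℂ → ℂ := fun z => (g z - a) / (1 - (starRingEnd ℂ) a * g z) with hφ
      have hφd : DifferentiableOn ℂ φ (ball (0:ℂ) 1) := by
        apply DifferentiableOn.div
        · exact hgb.sub (differentiableOn_const a)
        · exact (differentiableOn_const 1).sub ((differentiableOn_const _).mul hgb)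
        · exact hden
      have hφ0 : φ 0 = 0 := by simp [hφ, ← ha]
      have hφmaps : MapsTo φ (ball (0:ℂ) 1) (ball (φ 0) 1) := by
        intro z hz
        rw [hφ0, mem_ball_zero_iff, hφ, norm_div, div_lt_one]
        · have h1 : normSq (g z) < 1 := by
            rw [← Complex.sq_norm]; nlinarith [hglt z hz, norm_nonneg (g z)]
          have h2 : normSq a < 1 := by
            rw [← Complex.sq_norm]; nlinarith
          have := unkelbach_mobius_normSq a (g z)
          have h3 : normSq (g z - a) < normSq (1 - (starRingEnd ℂ) a * g z) := by nlinarith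
          have := Complex.sq_norm (g z - a)
          have := Complex.sq_norm (1 - (starRingEnd ℂ) a * g z)
          nlinarith [norm_nonneg (g z - a),
            norm_nonneg (1 - (starRingEnd ℂ) a * g z)]
        · exact (norm_pos_iff.mpr (hden z hz))
      have hsch := Complex.dist_le_div_mul_dist_of_mapsTo_ball hφd (hφmaps.mono_right ball_subset_closedBall) hrb
      rw [hφ0] at hsch
      have hφr : ‖φ r‖ ≤ r := by
        simpa [Complex.dist_eq, Complex.norm_real, abs_of_pos hr0] using hsch
      set w := g (r : ℂ) with hw
      have hineq : ‖w - a‖ ≤ r * ‖1 - (starRingEnd ℂ) a * w‖ := by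
        rw [hφ, norm_div, div_le_iff₀ (norm_pos_iff.mpr (hden _ hrb))] at hφr
        exact hφr
      have hsq : normSq (w - a) ≤ r ^ 2 * normSq (1 - (starRingEnd ℂ) a * w) := by
        rw [← Complex.sq_norm, ← Complex.sq_norm]
        calc ‖w - a‖ ^ 2
            ≤ (r * ‖1 - (starRingEnd ℂ) a * w‖) ^ 2 :=
              pow_le_pow_left₀ (norm_nonneg _) hineq 2
          _ = r ^ 2 * ‖1 - (starRingEnd ℂ) a * w‖ ^ 2 := by ring
      set t := ‖w‖ with htdef
      set s := ((starRingEnd ℂ) a * w).re with hsdef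
      have hexp1 : normSq (w - a) = t ^ 2 - 2 * s + m ^ 2 := by
        rw [htdef, hm, Complex.sq_norm, Complex.sq_norm, hsdef]
        simp only [normSq_apply, Complex.sub_re, Complex.sub_im, Complex.mul_re, Complex.mul_im,
          Complex.conj_re, Complex.conj_im]
        ring
      have hexp2 : normSq (1 - (starRingEnd ℂ) a * w) = 1 + m ^ 2 * t ^ 2 - 2 * s := by
        rw [htdef, hm, Complex.sq_norm, Complex.sq_norm, hsdef]
        simp only [normSq_apply, Complex.sub_re, Complex.sub_im, Complex.mul_re, Complex.mul_im,
          Complex.conj_re, Complex.conj_im, Complex.one_re, Complex.one_im]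
        ring
      have hs' : s ≤ m * t := by
        rw [hsdef, htdef, hm]
        calc ((starRingEnd ℂ) a * w).re ≤ ‖(starRingEnd ℂ) a * w‖ :=
              Complex.re_le_norm _
          _ = ‖a‖ * ‖w‖ := by rw [norm_mul, Complex.norm_conj]
      have hQ : t ^ 2 - 2 * s + m ^ 2 ≤ r ^ 2 * (1 + m ^ 2 * t ^ 2 - 2 * s) := by
        rw [← hexp1, ← hexp2]; exact hsq
      exact unkelbach_quad_bound hm0 hm1 hr0 hr1 (norm_nonneg w) ht1 hs' hQ
  -- radial limit
  have hRe : (1 - m) / (1 + m) ≤ (deriv g 1).re := by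
    have htend : Tendsto (slope g 1) (𝓝[≠] (1:ℂ)) (𝓝 (deriv g 1)) :=
      hasDerivAt_iff_tendsto_slope.mp hg1d.hasDerivAt
    have hmapt : Tendsto (fun r : ℝ => (r : ℂ)) (𝓝[<] (1:ℝ)) (𝓝[≠] (1:ℂ)) := by
      rw [tendsto_nhdsWithin_iff]
      constructor
      · exact ((Complex.continuous_ofReal.tendsto 1).mono_left nhdsWithin_le_nhds).congr
          (fun x => by simp)
      · exact eventually_mem_nhdsWithin.mono fun r hr => by
          simp only [mem_compl_iff, mem_singleton_iff]
          exact_mod_cast (ne_of_lt hr)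
    have htend2 : Tendsto (fun r : ℝ => (slope g 1 (r:ℂ)).re) (𝓝[<] (1:ℝ))
        (𝓝 (deriv g 1).re) :=
      (Complex.continuous_re.tendsto _).comp (htend.comp hmapt)
    refine ge_of_tendsto htend2 ?_
    filter_upwards [Ioo_mem_nhdsLT_of_mem (show (1:ℝ) ∈ Ioc (0:ℝ) 1 by constructor <;> norm_num)]
      with r hr
    obtain ⟨hr0, hr1⟩ := hr
    have hrb : (↑r : ℂ) ∈ ball (0:ℂ) 1 := by
      rw [mem_ball_zero_iff]
      simpa [Complex.norm_real, abs_of_pos hr0] using hr1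
    have h1r : (0:ℝ) < 1 - r := by linarith
    have hslope : slope g 1 (r:ℂ) = ((((1 - r)⁻¹ : ℝ)) : ℂ) * (1 - g r) := by
      rw [slope_def_field, div_eq_inv_mul]
      push_cast
      rw [show ((r:ℂ) - 1) = -((1:ℂ) - r) by ring, inv_neg, hg1]
      ring
    rw [hslope, Complex.re_ofReal_mul]
    have hre : (1 - g (r:ℂ)).re ≥ (1 - m) / (1 + m) * (1 - r) := by
      have ht := habs r ⟨hr0, hr1⟩
      have ht1 := hg_le _ hrb
      have hwre : (g (r:ℂ)).re ≤ ‖g r‖ := Complex.re_le_norm _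
      rw [Complex.sub_re, Complex.one_re, ge_iff_le, div_mul_eq_mul_div, div_le_iff₀ h1m]
      nlinarith [norm_nonneg (g (r:ℂ)),
        mul_nonneg (mul_nonneg hm0 (sub_nonneg.2 ht1)) h1r.le,
        mul_nonneg (sub_nonneg.2 hwre) h1m.le]
    rw [le_inv_mul_iff₀ h1r, mul_comm]
    exact hre
  -- conclude
  rw [hderiv1, hderiv0, ← hm]
  have : (1 + deriv g 1).re = 1 + (deriv g 1).re := by simp
  rw [this, ge_iff_le, div_le_iff₀ h1m]
  nlinarith [mul_le_mul_of_nonneg_right hRe h1m.le, div_mul_cancel₀ (1 - m) (ne_of_gt h1m)]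
end

section
/- Let f be holomorphic on an open set containing the open unit disk 𝔻 and the point 1, with |f(z)| < 1 for all z ∈ 𝔻, f(0) = 0, and f(1) = 1. Then f'(1) is a real number with f'(1) ≥ 1; and if f is not the identity function on 𝔻, then f'(1) > 1. -/
open Complex Metric Set Filter Topology

namespace BoundaryFix

/-- Core boundary positivity lemma: if `|g| ≤ 1` on the unit ball and
`1 - g z = (1-z)^n * h z` near `1` with `h` continuous at `1`, then for each
direction `α` with `|α| < π/2` we get `Re(e^{inα} h 1) ≥ 0`. -/
lemma core_nonneg (g : ℂ → ℂ) (hball : ∀ z ∈ ball (0:ℂ) 1, ‖g z‖ ≤ 1)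
    (n : ℕ) (h : ℂ → ℂ) (hcont : ContinuousAt h 1)
    (heq : ∀ᶠ z in 𝓝 (1:ℂ), 1 - g z = (1 - z) ^ n * h z)
    (α : ℝ) (hα : |α| < Real.pi / 2) :
    0 ≤ (Complex.exp ((n * α : ℝ) * I) * h 1).re := by
  obtain ⟨hα1, hα2⟩ := abs_lt.1 hα
  have hcos : 0 < Real.cos α := Real.cos_pos_of_mem_Ioo ⟨by linarith, hα2⟩
  set w : ℂ := Complex.exp ((α : ℂ) * I) with hw
  have hwre : w.re = Real.cos α := Complex.exp_ofReal_mul_I_re α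
  have hwim : w.im = Real.sin α := Complex.exp_ofReal_mul_I_im α
  have hpath : Tendsto (fun ε : ℝ => 1 - (ε : ℂ) * w) (𝓝[>] 0) (𝓝 1) := by
    have h0 : Tendsto (fun ε : ℝ => 1 - (ε : ℂ) * w) (𝓝 0) (𝓝 1) := by
      have hc : Continuous (fun ε : ℝ => 1 - (ε : ℂ) * w) := by continuity
      have := hc.tendsto (0 : ℝ)
      simpa using this
    exact h0.mono_left nhdsWithin_le_nhds
  have hmemball : ∀ᶠ ε : ℝ in 𝓝[>] 0, (1 : ℂ) - ε * w ∈ ball (0:ℂ) 1 := by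
    filter_upwards [Ioo_mem_nhdsGT_of_mem (Set.left_mem_Ico.2 hcos)] with ε hε
    rw [mem_ball_zero_iff]
    have hns : Complex.normSq (1 - ε * w) = 1 - 2 * ε * Real.cos α + ε ^ 2 := by
      have hsc := Real.sin_sq_add_cos_sq α
      simp only [Complex.normSq_apply, Complex.sub_re, Complex.sub_im, Complex.one_re,
        Complex.one_im, Complex.mul_re, Complex.mul_im, Complex.ofReal_re, Complex.ofReal_im,
        hwre, hwim]
      ring_nf
      nlinarith [hsc]
    have habs := Complex.sq_norm (1 - ε * w)
    nlinarith [norm_nonneg (1 - ε * w), hε.1, hε.2]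
  have key : ∀ᶠ ε : ℝ in 𝓝[>] 0,
      0 ≤ (Complex.exp ((n * α : ℝ) * I) * h (1 - ε * w)).re := by
    filter_upwards [hmemball, hpath.eventually heq, self_mem_nhdsWithin] with ε hb he hε
    have hεpos : (0:ℝ) < ε := hε
    have hwn : ((1:ℂ) - (1 - ε * w)) ^ n = (ε:ℂ) ^ n * Complex.exp ((n * α : ℝ) * I) := by
      have h1 : (1:ℂ) - (1 - ε * w) = ε * w := by ring
      rw [h1, mul_pow, hw, ← Complex.exp_nat_mul]
      push_cast
      ring_nf
    have hre : 0 ≤ (1 - g (1 - ε * w)).re := by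
      have h1 : (g (1 - ε * w)).re ≤ 1 := le_trans (Complex.re_le_norm _) (hball _ hb)
      simp only [Complex.sub_re, Complex.one_re]
      linarith
    rw [he, hwn] at hre
    have : ((ε:ℂ) ^ n * Complex.exp ((n * α : ℝ) * I) * h (1 - ε * w)).re
        = ε ^ n * (Complex.exp ((n * α : ℝ) * I) * h (1 - ε * w)).re := by
      rw [mul_assoc]
      rw [show ((ε:ℂ)) ^ n = ((ε ^ n : ℝ) : ℂ) by push_cast; ring]
      exact Complex.re_ofReal_mul _ _
    rw [this] at hre
    have hpow : (0:ℝ) < ε ^ n := pow_pos hεpos n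
    nlinarith
  have hlim : Tendsto (fun ε : ℝ => (Complex.exp ((n * α : ℝ) * I) * h (1 - ε * w)).re)
      (𝓝[>] 0) (𝓝 ((Complex.exp ((n * α : ℝ) * I) * h 1).re)) := by
    have hc : ContinuousAt (fun z : ℂ => (Complex.exp ((n * α : ℝ) * I) * h z).re) 1 :=
      Complex.continuous_re.continuousAt.comp (continuousAt_const.mul hcont)
    exact hc.tendsto.comp hpath
  exact ge_of_tendsto hlim key

/-- Extend the positivity from the open interval to the closed one. -/
lemma nonneg_Icc {c : ℂ} (n : ℕ)
    (H : ∀ α : ℝ, |α| < Real.pi / 2 → 0 ≤ (Complex.exp ((n * α : ℝ) * I) * c).re) :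
    ∀ α ∈ Icc (-(Real.pi/2)) (Real.pi/2), 0 ≤ (Complex.exp ((n * α : ℝ) * I) * c).re := by
  have hπ := Real.pi_pos
  have hcl : IsClosed {α : ℝ | 0 ≤ (Complex.exp ((n * α : ℝ) * I) * c).re} := by
    apply isClosed_le continuous_const
    apply Complex.continuous_re.comp
    apply Continuous.mul _ continuous_const
    apply Complex.continuous_exp.comp
    continuity
  have hsub : Ioo (-(Real.pi/2)) (Real.pi/2)
      ⊆ {α : ℝ | 0 ≤ (Complex.exp ((n * α : ℝ) * I) * c).re} :=
    fun α hα => H α (abs_lt.2 ⟨hα.1, hα.2⟩)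
  have hcls := closure_minimal hsub hcl
  rw [closure_Ioo (by linarith : -(Real.pi/2) ≠ Real.pi/2)] at hcls
  exact fun α hα => hcls hα

/-- When `n ≥ 2`, the positivity for all directions forces `c = 0`. -/
lemma eq_zero_of_nonneg {c : ℂ} (n : ℕ) (hn : 2 ≤ n)
    (H : ∀ α : ℝ, |α| < Real.pi / 2 → 0 ≤ (Complex.exp ((n * α : ℝ) * I) * c).re) :
    c = 0 := by
  by_contra hc
  have hπ := Real.pi_pos
  have habsc : (0:ℝ) < ‖c‖ := norm_pos_iff.mpr hc
  set u : ℂ := -(starRingEnd ℂ) c / ((‖c‖ : ℝ) : ℂ) with hu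
  have habsu : ‖u‖ = 1 := by
    rw [hu, norm_div]
    simp [hc]
  have hexp : Complex.exp ((Complex.arg u : ℂ) * I) = u := by
    have h0 := Complex.norm_mul_exp_arg_mul_I u
    rwa [habsu, Complex.ofReal_one, one_mul] at h0
  have hnR : (0:ℝ) < (n:ℝ) := by exact_mod_cast Nat.lt_of_lt_of_le Nat.zero_lt_two hn
  have hargle : |Complex.arg u| ≤ Real.pi := Complex.abs_arg_le_pi u
  set α : ℝ := Complex.arg u / n with hαdef
  have hα : α ∈ Icc (-(Real.pi/2)) (Real.pi/2) := by
    have h2 : (2:ℝ) ≤ (n:ℝ) := by exact_mod_cast hn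
    have habs : |α| ≤ Real.pi / 2 := by
      rw [hαdef, abs_div, abs_of_pos hnR]
      rw [div_le_div_iff₀ hnR two_pos]
      nlinarith [abs_nonneg (Complex.arg u)]
    exact abs_le.1 habs
  have h0 := nonneg_Icc n H α hα
  have hna : ((n:ℝ) * α) = Complex.arg u := by
    rw [hαdef]; field_simp
  rw [hna] at h0
  rw [hexp] at h0
  have hval : (u * c).re = -(Complex.normSq c / ‖c‖) := by
    have h1 : u * c = -((c * (starRingEnd ℂ) c) / ((‖c‖ : ℝ) : ℂ)) := by
      rw [hu]; ring
    rw [h1, Complex.mul_conj, ← Complex.ofReal_div, ← Complex.ofReal_neg, Complex.ofReal_re]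
  rw [hval] at h0
  have hns : 0 < Complex.normSq c := Complex.normSq_pos.2 hc
  have : 0 < Complex.normSq c / ‖c‖ := div_pos hns habsc
  linarith

/-- Real part / imaginary part of `e^{iθ}·c`. -/
lemma exp_mul_re (θ : ℝ) (c : ℂ) :
    (Complex.exp ((θ:ℝ) * I) * c).re = Real.cos θ * c.re - Real.sin θ * c.im := by
  rw [Complex.mul_re, Complex.exp_ofReal_mul_I_re, Complex.exp_ofReal_mul_I_im]

/-- Lemma A: a holomorphic map with `|g| ≤ 1` on the ball and `g 1 = 1` has real,
nonnegative derivative at `1`. -/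
lemma deriv_im_re (U : Set ℂ) (hU : IsOpen U) (hUD : ball (0:ℂ) 1 ⊆ U) (h1U : (1:ℂ) ∈ U)
    (g : ℂ → ℂ) (hg : DifferentiableOn ℂ g U)
    (hball : ∀ z ∈ ball (0:ℂ) 1, ‖g z‖ ≤ 1) (hg1 : g 1 = 1) :
    (deriv g 1).im = 0 ∧ 0 ≤ (deriv g 1).re := by
  have hπ := Real.pi_pos
  set h : ℂ → ℂ := dslope g 1 with hh
  have hhd : DifferentiableOn ℂ h U := (Complex.differentiableOn_dslope (hU.mem_nhds h1U)).2 hg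
  have hcont : ContinuousAt h 1 := (hhd.differentiableAt (hU.mem_nhds h1U)).continuousAt
  have heq : ∀ᶠ z in 𝓝 (1:ℂ), 1 - g z = (1 - z) ^ 1 * h z := by
    refine Filter.Eventually.of_forall fun z => ?_
    rcases eq_or_ne z 1 with rfl | hz
    · simp [hg1]
    · rw [hh, dslope_of_ne _ hz, slope_def_field, hg1, pow_one]
      have hz' : z - 1 ≠ 0 := sub_ne_zero.2 hz
      field_simp
      ring
  have h1 : h 1 = deriv g 1 := dslope_same g 1
  have H : ∀ α : ℝ, |α| < Real.pi / 2 →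
      0 ≤ (Complex.exp (((1:ℕ) * α : ℝ) * I) * deriv g 1).re := by
    intro α hα
    have := core_nonneg g hball 1 h hcont heq α hα
    rwa [h1] at this
  have H' := nonneg_Icc 1 H
  have e1 := H' (Real.pi/2) ⟨by linarith, le_refl _⟩
  have e2 := H' (-(Real.pi/2)) ⟨le_refl _, by linarith⟩
  have e3 := H' 0 ⟨by linarith, by linarith⟩
  rw [show ((1:ℕ) * (Real.pi/2) : ℝ) = Real.pi/2 by norm_num, exp_mul_re,
    Real.cos_pi_div_two, Real.sin_pi_div_two] at e1
  rw [show ((1:ℕ) * (-(Real.pi/2)) : ℝ) = -(Real.pi/2) by norm_num, exp_mul_re,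
    Real.cos_neg, Real.sin_neg, Real.cos_pi_div_two, Real.sin_pi_div_two] at e2
  rw [show ((1:ℕ) * (0:ℝ) : ℝ) = 0 by norm_num, exp_mul_re, Real.cos_zero, Real.sin_zero] at e3
  constructor
  · linarith
  · linarith

/-- Lemma B: under the same hypotheses, if `g` is not identically `1` on the ball,
then `deriv g 1 ≠ 0`. -/
lemma deriv_ne_zero (U : Set ℂ) (hU : IsOpen U) (hUD : ball (0:ℂ) 1 ⊆ U) (h1U : (1:ℂ) ∈ U)
    (g : ℂ → ℂ) (hg : DifferentiableOn ℂ g U)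
    (hball : ∀ z ∈ ball (0:ℂ) 1, ‖g z‖ ≤ 1) (hg1 : g 1 = 1)
    (z₀ : ℂ) (hz₀ : z₀ ∈ ball (0:ℂ) 1) (hgz₀ : g z₀ ≠ 1) :
    deriv g 1 ≠ 0 := by
  intro hder
  set F : ℂ → ℂ := fun z => g z - 1 with hFdef
  have hF : AnalyticAt ℂ F 1 := by
    have : AnalyticAt ℂ g 1 := hg.analyticAt (hU.mem_nhds h1U)
    exact this.sub analyticAt_const
  rcases eq_or_ne (analyticOrderAt F 1) ⊤ with htop | hfin
  · -- identity theorem case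
    have hFeq : ∀ᶠ z in 𝓝 (1:ℂ), F z = 0 := analyticOrderAt_eq_top.1 htop
    set V := connectedComponentIn U 1 with hV
    have hVopen : IsOpen V := hU.connectedComponentIn
    have h1V : (1:ℂ) ∈ V := mem_connectedComponentIn h1U
    have hVpre : IsPreconnected V := isPreconnected_connectedComponentIn
    obtain ⟨δ, hδpos, hδ⟩ := Metric.isOpen_iff.1 hU 1 h1U
    set δ' := min δ 1 with hδ'
    have hδ'pos : 0 < δ' := lt_min hδpos one_pos
    have hδ'le : δ' ≤ 1 := min_le_right _ _
    have hsub : ball (0:ℂ) 1 ∪ ball (1:ℂ) δ' ⊆ U :=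
      union_subset hUD ((ball_subset_ball (min_le_left _ _)).trans hδ)
    have hx : ((1 - δ'/2 : ℝ) : ℂ) ∈ ball (0:ℂ) 1 ∩ ball (1:ℂ) δ' := by
      constructor
      · rw [mem_ball_zero_iff, Complex.norm_real, Real.norm_eq_abs, abs_of_pos (by linarith)]
        linarith
      · rw [mem_ball, Complex.dist_eq]
        have : ((1 - δ'/2 : ℝ) : ℂ) - 1 = ((-(δ'/2) : ℝ) : ℂ) := by push_cast; ring
        rw [this, Complex.norm_real, Real.norm_eq_abs, abs_of_neg (by linarith)]
        linarith
    have hpre : IsPreconnected (ball (0:ℂ) 1 ∪ ball (1:ℂ) δ') :=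
      IsPreconnected.union _ hx.1 hx.2 (convex_ball _ _).isPreconnected
        (convex_ball _ _).isPreconnected
    have hballV : ball (0:ℂ) 1 ⊆ V :=
      subset_trans subset_union_left
        (hpre.subset_connectedComponentIn (mem_union_right _ (mem_ball_self hδ'pos)) hsub)
    have hgV : AnalyticOnNhd ℂ g V :=
      (hg.mono (connectedComponentIn_subset U 1)).analyticOnNhd hVopen
    have hconst : EqOn g (fun _ => (1:ℂ)) V :=
      hgV.eqOn_of_preconnected_of_eventuallyEq analyticOnNhd_const hVpre h1V
        (hFeq.mono fun z hz => by simpa [hFdef, sub_eq_zero] using hz)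
    exact hgz₀ (hconst (hballV hz₀))
  · obtain ⟨n, hn⟩ := WithTop.ne_top_iff_exists.1 hfin
    obtain ⟨h, hh, hh1, heq⟩ := (hF.analyticOrderAt_eq_natCast (n := n)).1 hn.symm
    have hF1 : F 1 = 0 := by simp [hFdef, hg1]
    match n, heq with
    | 0, heq =>
      have := heq.self_of_nhds
      simp only [pow_zero, one_smul] at this
      rw [hF1] at this
      exact hh1 this.symm
    | 1, heq =>
      -- deriv g 1 = h 1 ≠ 0, contradiction with hder
      have hd1 : HasDerivAt (fun z : ℂ => (z - 1) ^ 1 • h z) (h 1) 1 := by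
        have hhd : HasDerivAt h (deriv h 1) 1 := hh.differentiableAt.hasDerivAt
        have hid : HasDerivAt (fun z : ℂ => z - 1) 1 1 := (hasDerivAt_id 1).sub_const 1
        have := hid.mul hhd
        simpa [Pi.mul_def] using this
      have hF' : HasDerivAt F (h 1) 1 :=
        hd1.congr_of_eventuallyEq (heq.mono fun z hz => hz)
      have : deriv F 1 = h 1 := hF'.deriv
      rw [hFdef] at this
      rw [deriv_sub_const] at this
      rw [hder] at this
      exact hh1 this.symm
    | (m + 2), heq =>
      -- use core lemma with n = m + 2 ≥ 2
      set c : ℂ := (-1) ^ (m + 2 + 1) * h 1 with hc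
      have hcont : ContinuousAt (fun z => ((-1:ℂ)) ^ (m + 2 + 1) * h z) 1 :=
        continuousAt_const.mul hh.differentiableAt.continuousAt
      have heq' : ∀ᶠ z in 𝓝 (1:ℂ), 1 - g z = (1 - z) ^ (m + 2) * ((-1:ℂ) ^ (m + 2 + 1) * h z) := by
        refine heq.mono fun z hz => ?_
        have hz' : g z - 1 = (z - 1) ^ (m + 2) * h z := by
          simpa [hFdef, smul_eq_mul] using hz
        have h2 : (1:ℂ) - g z = -((z - 1) ^ (m + 2) * h z) := by
          rw [← hz']; ring
        rw [h2, show (z - 1 : ℂ) = -(1 - z) by ring, neg_pow]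
        ring
      have H : ∀ α : ℝ, |α| < Real.pi / 2 →
          0 ≤ (Complex.exp (((m + 2 : ℕ) * α : ℝ) * I) * c).re := by
        intro α hα
        have := core_nonneg g hball (m + 2) _ hcont heq' α hα
        simpa [hc] using this
      have hzero : c = 0 := eq_zero_of_nonneg (m + 2) (by omega) H
      rw [hc] at hzero
      rcases mul_eq_zero.1 hzero with h0 | h0
      · exact pow_ne_zero _ (by norm_num : (-1:ℂ) ≠ 0) h0
      · exact hh1 h0

end BoundaryFix

/-- A holomorphic self-map of the disk fixing `0` and the boundary point `1` has
derivative at least `1` at `1`, with strict inequality unless it is the identity. -/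
theorem deriv_ge_one_at_boundary_fixed_point
    (U : Set ℂ) (hU : IsOpen U) (hUD : ball (0 : ℂ) 1 ⊆ U) (h1U : (1 : ℂ) ∈ U)
    (f : ℂ → ℂ) (hf : DifferentiableOn ℂ f U)
    (hmap : ∀ z ∈ ball (0 : ℂ) 1, ‖f z‖ < 1)
    (hfix0 : f 0 = 0) (hfix1 : f 1 = 1) :
    (deriv f 1).im = 0 ∧ 1 ≤ (deriv f 1).re ∧
      ((¬ ∀ z ∈ ball (0 : ℂ) 1, f z = z) → 1 < (deriv f 1).re) := by
  have h0U : (0:ℂ) ∈ U := hUD (mem_ball_self one_pos)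
  set g : ℂ → ℂ := dslope f 0 with hgdef
  have hgd : DifferentiableOn ℂ g U :=
    (Complex.differentiableOn_dslope (hU.mem_nhds h0U)).2 hf
  have hb : ∀ z ∈ ball (0:ℂ) 1, ‖g z‖ ≤ 1 := by
    intro z hz
    have hmaps : MapsTo f (ball (0:ℂ) 1) (ball (f 0) 1) := by
      intro w hw
      rw [hfix0]
      exact mem_ball_zero_iff.2 (hmap w hw)
    have := Complex.norm_dslope_le_div_of_mapsTo_ball (hf.mono hUD) (hmaps.mono_right ball_subset_closedBall) hz
    simpa using this
  have hg1 : g 1 = 1 := by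
    rw [hgdef, dslope_of_ne f one_ne_zero, slope_def_field, hfix0, hfix1]
    norm_num
  have hfg : ∀ z, f z = z * g z := by
    intro z
    rcases eq_or_ne z 0 with rfl | hz
    · simp [hfix0]
    · rw [hgdef, dslope_of_ne f hz, slope_def_field, hfix0]
      field_simp
      ring
  have hgda : DifferentiableAt ℂ g 1 := hgd.differentiableAt (hU.mem_nhds h1U)
  have hder : HasDerivAt f (1 + deriv g 1) 1 := by
    have h1 : HasDerivAt (fun z : ℂ => z * g z) (1 * g 1 + 1 * deriv g 1) 1 :=
      (hasDerivAt_id 1).mul hgda.hasDerivAt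
    have h2 := h1.congr_of_eventuallyEq (Filter.Eventually.of_forall hfg)
    rw [hg1] at h2
    simpa using h2
  have hderiv : deriv f 1 = 1 + deriv g 1 := hder.deriv
  obtain ⟨him, hre⟩ := BoundaryFix.deriv_im_re U hU hUD h1U g hgd hb hg1
  refine ⟨?_, ?_, ?_⟩
  · rw [hderiv]; simp [Complex.add_im, him]
  · rw [hderiv]; simp only [Complex.add_re, Complex.one_re]; linarith
  · intro hne
    push_neg at hne
    obtain ⟨z₀, hz₀, hfz₀⟩ := hne
    have hgz₀ : g z₀ ≠ 1 := fun h => hfz₀ (by rw [hfg z₀, h, mul_one])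
    have hne0 := BoundaryFix.deriv_ne_zero U hU hUD h1U g hgd hb hg1 z₀ hz₀ hgz₀
    have hrepos : 0 < (deriv g 1).re := by
      rcases hre.lt_or_eq with hlt | heq
      · exact hlt
      · exfalso; exact hne0 (Complex.ext heq.symm him)
    rw [hderiv]; simp only [Complex.add_re, Complex.one_re]; linarith
end

section
/- Let f be holomorphic on an open set containing the upper half-plane ℍ and the points 0 and 1, with f(z) ∈ ℍ for all z ∈ ℍ, f(0) = 0, f(1) = 1, and f not constant. If f'(0) = 1 and f'(1) = 1, then f has a fixed point in the open upper half-plane: there exists z ∈ ℍ with f(z) = z. -/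
open Complex
open Metric Set Filter Topology

lemma key_id (a b : ℂ) :
    ‖a - (starRingEnd ℂ) b‖ ^ 2 = ‖a - b‖ ^ 2 + 4 * a.im * b.im := by
  rw [← Complex.normSq_eq_norm_sq, ← Complex.normSq_eq_norm_sq]
  simp only [Complex.normSq_apply, Complex.sub_re, Complex.sub_im, Complex.conj_re,
    Complex.conj_im]
  ring

lemma denom_ne {a b : ℂ} (ha : 0 < a.im) (hb : 0 < b.im) : a - (starRingEnd ℂ) b ≠ 0 := by
  intro h
  have := congrArg Complex.im h
  simp only [Complex.sub_im, Complex.conj_im, Complex.zero_im] at this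
  linarith

lemma abs_sub_lt {a b : ℂ} (ha : 0 < a.im) (hb : 0 < b.im) :
    ‖a - b‖ < ‖a - (starRingEnd ℂ) b‖ := by
  have h := key_id a b
  have h1 : (0:ℝ) ≤ ‖a - b‖ := norm_nonneg _
  have h2 : (0:ℝ) ≤ ‖a - (starRingEnd ℂ) b‖ := norm_nonneg _
  nlinarith

lemma sp {U : Set ℂ} (hU : IsOpen U) (hUH : {z : ℂ | 0 < z.im} ⊆ U)
    {f : ℂ → ℂ} (hf : DifferentiableOn ℂ f U)
    (hmap : ∀ z : ℂ, 0 < z.im → 0 < (f z).im)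
    {z v : ℂ} (hz : 0 < z.im) (hv : 0 < v.im) :
    z.im * v.im * ‖f z - (starRingEnd ℂ) (f v)‖ ^ 2
      ≤ (f z).im * (f v).im * ‖z - (starRingEnd ℂ) v‖ ^ 2 := by
  have hfv : 0 < (f v).im := hmap v hv
  have hfz : 0 < (f z).im := hmap z hz
  set φ : ℂ → ℂ := fun ζ => (v - (starRingEnd ℂ) v * ζ) / (1 - ζ) with hφ
  -- φ maps the unit ball into the upper half plane
  have hφim : ∀ ζ : ℂ, ‖ζ‖ < 1 → 0 < (φ ζ).im := by
    intro ζ hζ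
    have hne : (1 : ℂ) - ζ ≠ 0 := by
      intro h
      have : ζ = 1 := by linear_combination -h
      rw [this] at hζ; simp at hζ
    have hns : 0 < Complex.normSq (1 - ζ) := Complex.normSq_pos.2 hne
    have hζ2 : ζ.re ^ 2 + ζ.im ^ 2 < 1 := by
      have := Complex.sq_norm ζ
      rw [Complex.normSq_apply] at this
      nlinarith [norm_nonneg ζ]
    simp only [hφ, Complex.div_im]
    rw [div_sub_div_same, lt_div_iff₀ hns]
    simp only [Complex.sub_im, Complex.sub_re, Complex.mul_im, Complex.mul_re,
      Complex.conj_re, Complex.conj_im, Complex.one_re, Complex.one_im]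
    nlinarith
  have hφ0 : φ 0 = v := by rw [hφ]; simp
  set ψ : ℂ → ℂ := fun w => (w - f v) / (w - (starRingEnd ℂ) (f v)) with hψ
  set g : ℂ → ℂ := fun ζ => ψ (f (φ ζ)) with hg
  have hgd : DifferentiableOn ℂ g (ball (0:ℂ) 1) := by
    intro ζ hζ
    rw [mem_ball_zero_iff] at hζ
    have hne : (1 : ℂ) - ζ ≠ 0 := by
      intro h
      have : ζ = 1 := by linear_combination -h
      rw [this] at hζ; simp at hζ
    have hφd : DifferentiableAt ℂ φ ζ := by
      apply DifferentiableAt.div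
      · fun_prop
      · fun_prop
      · exact hne
    have hφζ : 0 < (φ ζ).im := hφim ζ hζ
    have hfd : DifferentiableAt ℂ f (φ ζ) :=
      hf.differentiableAt (hU.mem_nhds (hUH hφζ))
    have hfφ : 0 < (f (φ ζ)).im := hmap _ hφζ
    have : DifferentiableAt ℂ g ζ := by
      apply DifferentiableAt.div
      · exact ((hfd.comp ζ hφd).sub_const _)
      · exact ((hfd.comp ζ hφd).sub_const _)
      · exact denom_ne hfφ hfv
    exact this.differentiableWithinAt
  have hgm : MapsTo g (ball (0:ℂ) 1) (ball (0:ℂ) 1) := by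
    intro ζ hζ
    rw [mem_ball_zero_iff] at hζ ⊢
    have hφζ : 0 < (φ ζ).im := hφim ζ hζ
    have hfφ : 0 < (f (φ ζ)).im := hmap _ hφζ
    simp only [hg, hψ, norm_div]
    rw [div_lt_one (norm_pos_iff.mpr (denom_ne hfφ hfv))]
    exact abs_sub_lt hfφ hfv
  have hg0 : g 0 = 0 := by
    simp only [hg, hψ, hφ0, sub_self, zero_div]
  -- the point ζ₀
  set ζ₀ : ℂ := (z - v) / (z - (starRingEnd ℂ) v) with hζ₀def
  have hzv : z - (starRingEnd ℂ) v ≠ 0 := denom_ne hz hv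
  have hζ₀lt : ‖ζ₀‖ < 1 := by
    rw [hζ₀def, norm_div, div_lt_one (norm_pos_iff.mpr hzv)]
    exact abs_sub_lt hz hv
  have hφζ₀ : φ ζ₀ = z := by
    have hden : (1:ℂ) - ζ₀ = (v - (starRingEnd ℂ) v) / (z - (starRingEnd ℂ) v) := by
      rw [hζ₀def]; field_simp; ring
    have hvv : v - (starRingEnd ℂ) v ≠ 0 := by
      intro h
      have := congrArg Complex.im h
      simp only [Complex.sub_im, Complex.conj_im, Complex.zero_im] at this
      linarith
    have h1ζ : (1:ℂ) - ζ₀ ≠ 0 := by rw [hden]; exact div_ne_zero hvv hzv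
    simp only [hφ]
    rw [div_eq_iff h1ζ, hζ₀def]
    field_simp
    ring
  have key := Complex.norm_le_norm_of_mapsTo_ball hgd (hgm.mono_right ball_subset_closedBall) hg0 hζ₀lt
  simp only [hg, hψ, hφζ₀] at key; simp only [hζ₀def, norm_div] at key
  rw [div_le_div_iff₀ (norm_pos_iff.mpr (denom_ne hfz hfv)) (norm_pos_iff.mpr hzv)] at key
  -- now square and use the identities
  have hid1 := key_id (f z) (f v)
  have hid2 := key_id z v
  have h1 : (0:ℝ) ≤ ‖f z - f v‖ := norm_nonneg _
  have h2 : (0:ℝ) ≤ ‖z - v‖ := norm_nonneg _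
  have h3 : (0:ℝ) ≤ ‖z - (starRingEnd ℂ) v‖ := norm_nonneg _
  have h4 : (0:ℝ) ≤ ‖f z - (starRingEnd ℂ) (f v)‖ := norm_nonneg _
  nlinarith [mul_le_mul key key (by positivity) (by positivity),
    mul_pos hz hv, mul_pos hfz hfv, sq_nonneg (‖f z - f v‖),
    sq_nonneg (‖z - v‖)]

lemma julia {U : Set ℂ} (hU : IsOpen U) (hUH : {z : ℂ | 0 < z.im} ⊆ U)
    {f : ℂ → ℂ} (hf : DifferentiableOn ℂ f U)
    (hmap : ∀ z : ℂ, 0 < z.im → 0 < (f z).im)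
    {c : ℂ} (hc : c.im = 0) (hcU : c ∈ U) (hfc : f c = c) (hdc : deriv f c = 1)
    {z : ℂ} (hz : 0 < z.im) :
    z.im * ‖f z - c‖ ^ 2 ≤ (f z).im * ‖z - c‖ ^ 2 := by
  have hfz : 0 < (f z).im := hmap z hz
  have hfd : DifferentiableAt ℂ f c := hf.differentiableAt (hU.mem_nhds hcU)
  have hder : HasDerivAt f 1 c := by
    have := hfd.hasDerivAt
    rwa [hdc] at this
  have hconjc : (starRingEnd ℂ) c = c := Complex.conj_eq_iff_im.mpr hc
  have hvim : ∀ ε : ℝ, (c + (ε:ℂ) * I).im = ε := by intro ε; simp [hc]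
  have hineq : ∀ ε : ℝ, 0 < ε →
      z.im * ‖f z - (starRingEnd ℂ) (f (c + (ε:ℂ) * I))‖ ^ 2
        ≤ (f z).im * ((f (c + (ε:ℂ) * I)).im / ε)
            * ‖z - (starRingEnd ℂ) (c + (ε:ℂ) * I)‖ ^ 2 := by
    intro ε hε
    have hv : 0 < (c + (ε:ℂ) * I).im := by rw [hvim]; exact hε
    have h := sp hU hUH hf hmap hz hv
    rw [hvim] at h
    calc z.im * ‖f z - (starRingEnd ℂ) (f (c + (ε:ℂ) * I))‖ ^ 2
        = (z.im * ε * ‖f z - (starRingEnd ℂ) (f (c + (ε:ℂ) * I))‖ ^ 2) / ε := by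
          field_simp
      _ ≤ ((f z).im * (f (c + (ε:ℂ) * I)).im
            * ‖z - (starRingEnd ℂ) (c + (ε:ℂ) * I)‖ ^ 2) / ε := by
          gcongr
      _ = (f z).im * ((f (c + (ε:ℂ) * I)).im / ε)
            * ‖z - (starRingEnd ℂ) (c + (ε:ℂ) * I)‖ ^ 2 := by
          ring
  set l : Filter ℝ := 𝓝[>] (0:ℝ) with hldef
  have hcont : Continuous fun ε : ℝ => c + (ε:ℂ) * I := by continuity
  have T0 : Tendsto (fun ε : ℝ => c + (ε:ℂ) * I) l (𝓝 c) := by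
    have h := (hcont.tendsto 0).mono_left (nhdsWithin_le_nhds (s := Set.Ioi (0:ℝ)))
    simpa using h
  have T1 : Tendsto (fun ε : ℝ => f (c + (ε:ℂ) * I)) l (𝓝 c) := by
    have := (hfd.continuousAt.tendsto).comp T0
    rwa [hfc] at this
  -- T2 : the imaginary part over ε tends to 1
  have hne : Tendsto (fun ε : ℝ => c + (ε:ℂ) * I) l (𝓝[≠] c) := by
    rw [tendsto_nhdsWithin_iff]
    refine ⟨T0, ?_⟩
    filter_upwards [self_mem_nhdsWithin] with ε (hε : 0 < ε)
    intro heq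
    have := congrArg Complex.im heq
    rw [hvim, hc] at this
    exact absurd this (ne_of_gt hε)
  have hs := hasDerivAt_iff_tendsto_slope.mp hder
  have hcomp := hs.comp hne
  have T2' : Tendsto (fun ε : ℝ => (slope f c (c + (ε:ℂ) * I)).re) l (𝓝 1) := by
    have := (Complex.continuous_re.tendsto 1).comp hcomp
    exact this
  have T2 : Tendsto (fun ε : ℝ => (f (c + (ε:ℂ) * I)).im / ε) l (𝓝 1) := by
    refine T2'.congr' ?_
    filter_upwards [self_mem_nhdsWithin] with ε (hε : 0 < ε)
    have hd : c + (ε:ℂ) * I - c = (ε:ℂ) * I := by ring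
    rw [slope_def_field, hfc, hd, Complex.div_re]
    simp [Complex.normSq_apply, hc]
    field_simp
  have T3 : Tendsto (fun ε : ℝ =>
      ‖f z - (starRingEnd ℂ) (f (c + (ε:ℂ) * I))‖ ^ 2) l
      (𝓝 (‖f z - c‖ ^ 2)) := by
    have hcont2 : Continuous fun w : ℂ => ‖f z - (starRingEnd ℂ) w‖ ^ 2 := by
      continuity
    have := (hcont2.tendsto c).comp T1
    simp only [Function.comp_def] at this
    rwa [hconjc] at this
  have T4 : Tendsto (fun ε : ℝ =>
      ‖z - (starRingEnd ℂ) (c + (ε:ℂ) * I)‖ ^ 2) l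
      (𝓝 (‖z - c‖ ^ 2)) := by
    have hcont2 : Continuous fun w : ℂ => ‖z - (starRingEnd ℂ) w‖ ^ 2 := by
      continuity
    have := (hcont2.tendsto c).comp T0
    simp only [Function.comp_def] at this
    rwa [hconjc] at this
  have TL : Tendsto (fun ε : ℝ =>
      z.im * ‖f z - (starRingEnd ℂ) (f (c + (ε:ℂ) * I))‖ ^ 2) l
      (𝓝 (z.im * ‖f z - c‖ ^ 2)) := T3.const_mul _
  have TR : Tendsto (fun ε : ℝ =>
      (f z).im * ((f (c + (ε:ℂ) * I)).im / ε)
        * ‖z - (starRingEnd ℂ) (c + (ε:ℂ) * I)‖ ^ 2) l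
      (𝓝 ((f z).im * 1 * ‖z - c‖ ^ 2)) := (T2.const_mul _).mul T4
  rw [mul_one] at TR
  refine le_of_tendsto_of_tendsto TL TR ?_
  filter_upwards [self_mem_nhdsWithin] with ε (hε : 0 < ε)
  exact hineq ε hε

/-- If a nonconstant holomorphic self-map of the half-plane fixes the boundary points
`0` and `1` with derivative `1` at both, then it has an interior fixed point. -/
theorem interior_fixed_point_of_two_boundary_derivatives_one
    (U : Set ℂ) (hU : IsOpen U) (hUH : {z : ℂ | 0 < z.im} ⊆ U)
    (h0U : (0 : ℂ) ∈ U) (h1U : (1 : ℂ) ∈ U)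
    (f : ℂ → ℂ) (hf : DifferentiableOn ℂ f U)
    (hmap : ∀ z : ℂ, 0 < z.im → 0 < (f z).im)
    (hfix0 : f 0 = 0) (hfix1 : f 1 = 1)
    (hnc : ¬ ∃ w : ℂ, ∀ z : ℂ, 0 < z.im → f z = w)
    (hd0 : deriv f 0 = 1) (hd1 : deriv f 1 = 1) :
    ∃ z : ℂ, 0 < z.im ∧ f z = z := by
  set p : ℂ := ⟨1/2, 1/2⟩ with hpdef
  have hpim : p.im = 1/2 := rfl
  have hpre : p.re = 1/2 := rfl
  have hppos : 0 < p.im := by rw [hpim]; norm_num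
  have h0' := julia hU hUH hf hmap (c := (0:ℂ)) (by simp) h0U hfix0 hd0 hppos
  have h1' := julia hU hUH hf hmap (c := (1:ℂ)) (by simp) h1U hfix1 hd1 hppos
  rw [Complex.sq_norm, Complex.sq_norm] at h0' h1'
  set w : ℂ := f p with hwdef
  have hn0 : Complex.normSq (w - 0) = w.re ^ 2 + w.im ^ 2 := by
    simp [Complex.normSq_apply]; ring
  have hn1 : Complex.normSq (w - 1) = (w.re - 1) ^ 2 + w.im ^ 2 := by
    simp [Complex.normSq_apply]; ring
  have hq0 : Complex.normSq (p - 0) = 1/2 := by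
    simp [Complex.normSq_apply, hpre, hpim]; norm_num
  have hq1 : Complex.normSq (p - 1) = 1/2 := by
    simp [Complex.normSq_apply, hpre, hpim]; norm_num
  rw [hn0, hq0, hpim] at h0'
  rw [hn1, hq1, hpim] at h1'
  -- h0' : 1/2 * (w.re^2 + w.im^2) ≤ w.im * (1/2), etc.
  have e1 : w.re ^ 2 + w.im ^ 2 ≤ w.im := by nlinarith
  have e2 : (w.re - 1) ^ 2 + w.im ^ 2 ≤ w.im := by nlinarith
  have hre : w.re = 1/2 := by nlinarith [sq_nonneg (2*w.re - 1), sq_nonneg (2*w.im - 1)]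
  have him : w.im = 1/2 := by nlinarith [sq_nonneg (2*w.re - 1), sq_nonneg (2*w.im - 1)]
  exact ⟨p, hppos, Complex.ext (by rw [← hwdef, hre, hpre]) (by rw [← hwdef, him, hpim])⟩
end

section
/- (Wolff's monotonicity) Let f be holomorphic on the upper half-plane ℍ with f(z) ∈ ℍ for all z ∈ ℍ. Then for each fixed real x, the function y ↦ Im(f(x + i·y))/y is monotonically nonincreasing in y on (0, ∞); equivalently, if 0 < y₁ ≤ y₂ then Im(f(x + i·y₁))/y₁ ≥ Im(f(x + i·y₂))/y₂. -/
open Complex ComplexConjugate Metric Set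

lemma lemA (z w : ℂ) (hz : 0 < z.im) (hw : 0 < w.im) :
    ‖z - w‖ < ‖z - conj w‖ := by
  rw [Complex.norm_def, Complex.norm_def, Real.sqrt_lt_sqrt_iff (normSq_nonneg _)]
  simp [Complex.normSq_apply]
  nlinarith

lemma lemB (w ζ : ℂ) (hw : 0 < w.im) (hζ : ‖ζ‖ < 1) :
    0 < ((w - conj w * ζ) / (1 - ζ)).im := by
  have h1 : (1:ℂ) - ζ ≠ 0 := by
    intro h
    have : ζ = 1 := by linear_combination -h
    rw [this] at hζ; simp at hζ
  have h2 : (0:ℝ) < normSq (1 - ζ) := normSq_pos.mpr h1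
  have h3 : ζ.re^2 + ζ.im^2 < 1 := by
    have := Complex.sq_norm ζ
    simp [Complex.normSq_apply] at this
    nlinarith [norm_nonneg ζ]
  rw [Complex.div_im, div_sub_div_same]
  apply div_pos _ h2
  simp [Complex.normSq_apply]
  nlinarith

/-- Wolff's monotonicity: for a holomorphic self-map of the upper half-plane,
`Im f(x + iy) / y` is nonincreasing in `y`. -/
theorem wolff_monotonicity
    (f : ℂ → ℂ) (hf : DifferentiableOn ℂ f {z : ℂ | 0 < z.im})
    (hmap : ∀ z : ℂ, 0 < z.im → 0 < (f z).im) :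
    ∀ x y₁ y₂ : ℝ, 0 < y₁ → y₁ ≤ y₂ →
      (f ((x : ℂ) + (y₂ : ℂ) * Complex.I)).im / y₂ ≤
        (f ((x : ℂ) + (y₁ : ℂ) * Complex.I)).im / y₁ := by
  intro x y₁ y₂ hy₁ h12
  have hy₂ : 0 < y₂ := lt_of_lt_of_le hy₁ h12
  set w : ℂ := (x : ℂ) + (y₁ : ℂ) * Complex.I with hwdef
  set z₂ : ℂ := (x : ℂ) + (y₂ : ℂ) * Complex.I with hz₂def
  have hwim : w.im = y₁ := by simp [hwdef]
  have hz₂im : z₂.im = y₂ := by simp [hz₂def]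
  have hw : 0 < w.im := by rw [hwim]; exact hy₁
  have hz₂ : 0 < z₂.im := by rw [hz₂im]; exact hy₂
  set a : ℂ := f w with hadef
  have ha : 0 < a.im := hmap w hw
  set m : ℂ → ℂ := fun ζ => (w - conj w * ζ) / (1 - ζ) with hmdef
  have hball : ∀ ζ ∈ ball (0:ℂ) 1, 0 < (m ζ).im := fun ζ hζ =>
    lemB w ζ hw (mem_ball_zero_iff.mp hζ)
  have hone : ∀ ζ ∈ ball (0:ℂ) 1, (1:ℂ) - ζ ≠ 0 := by
    intro ζ hζ h
    have : ζ = 1 := by linear_combination -h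
    rw [this] at hζ; simp at hζ
  have hmdiff : DifferentiableOn ℂ m (ball 0 1) := by
    apply DifferentiableOn.div
    · fun_prop
    · fun_prop
    · exact hone
  have hFdiff : DifferentiableOn ℂ (fun ζ => f (m ζ)) (ball 0 1) :=
    hf.comp hmdiff (fun ζ hζ => hball ζ hζ)
  have hdenne : ∀ ζ ∈ ball (0:ℂ) 1, f (m ζ) - conj a ≠ 0 := by
    intro ζ hζ h
    have h2 := congrArg Complex.im h
    simp [Complex.sub_im, Complex.conj_im] at h2
    have := hmap (m ζ) (hball ζ hζ)
    linarith
  set g : ℂ → ℂ := fun ζ => (f (m ζ) - a) / (f (m ζ) - conj a) with hgdef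
  have hgdiff : DifferentiableOn ℂ g (ball 0 1) :=
    DifferentiableOn.div (hFdiff.sub (differentiableOn_const a))
      (hFdiff.sub (differentiableOn_const (conj a))) hdenne
  have hgmaps : MapsTo g (ball (0:ℂ) 1) (ball (0:ℂ) 1) := by
    intro ζ hζ
    rw [mem_ball_zero_iff, hgdef]
    simp only [map_div₀]
    have hlt := lemA (f (m ζ)) a (hmap (m ζ) (hball ζ hζ)) ha
    have hpos : 0 < ‖f (m ζ) - conj a‖ :=
      lt_of_le_of_lt (norm_nonneg _) hlt
    rw [norm_div]
    exact (div_lt_one hpos).mpr hlt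
  have hg0 : g 0 = 0 := by
    have hm0 : m 0 = w := by simp [hmdef]
    simp [hgdef, hm0, hadef]
  -- the point in the disk
  have hABlt : ‖z₂ - w‖ < ‖z₂ - conj w‖ := lemA z₂ w hz₂ hw
  have hBpos : 0 < ‖z₂ - conj w‖ := lt_of_le_of_lt (norm_nonneg _) hABlt
  set φ : ℂ := (z₂ - w) / (z₂ - conj w) with hφdef
  have hφlt : ‖φ‖ < 1 := by
    rw [hφdef, norm_div]
    exact (div_lt_one hBpos).mpr hABlt
  have hwne : w - conj w ≠ 0 := by
    intro h
    have h2 := congrArg Complex.im h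
    simp [Complex.sub_im, Complex.conj_im] at h2
    linarith
  have hz₂ne : z₂ - conj w ≠ 0 := by
    intro h
    have h2 := congrArg Complex.im h
    simp [Complex.sub_im, Complex.conj_im] at h2
    linarith
  have hmφ : m φ = z₂ := by
    rw [hmdef, hφdef]
    simp only
    rw [div_eq_iff (by rw [show (1:ℂ) - (z₂ - w) / (z₂ - conj w) = (w - conj w) / (z₂ - conj w) by field_simp; ring]; exact div_ne_zero hwne hz₂ne)]
    field_simp
    ring
  have key := norm_le_norm_of_mapsTo_ball hgdiff (hgmaps.mono_right ball_subset_closedBall) hg0 hφlt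
  rw [hgdef] at key
  simp only [hmφ] at key
  -- now arithmetic
  rw [hφdef] at key
  have e1 : z₂ - w = ((y₂ - y₁ : ℝ) : ℂ) * Complex.I := by
    rw [hz₂def, hwdef]; push_cast; ring
  have e2 : z₂ - conj w = ((y₂ + y₁ : ℝ) : ℂ) * Complex.I := by
    rw [hz₂def, hwdef]
    simp only [map_add, map_mul, Complex.conj_ofReal, Complex.conj_I]
    push_cast; ring
  rw [norm_div, norm_div, e1, e2, norm_mul, norm_mul, Complex.norm_I,
    Complex.norm_real, Complex.norm_real, Real.norm_eq_abs, Real.norm_eq_abs, mul_one, mul_one,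
    _root_.abs_of_nonneg (by linarith : (0:ℝ) ≤ y₂ - y₁),
    _root_.abs_of_nonneg (by linarith : (0:ℝ) ≤ y₂ + y₁)] at key
  have hfz : 0 < (f z₂).im := hmap z₂ hz₂
  have hfne : 0 < ‖f z₂ - conj a‖ :=
    lt_of_le_of_lt (norm_nonneg _) (lemA (f z₂) a hfz ha)
  rw [div_le_div_iff₀ hfne (by linarith : (0:ℝ) < y₂ + y₁)] at key
  have K := mul_self_le_mul_self (by positivity) key
  have hA : ‖f z₂ - a‖ ^ 2
      = ((f z₂).re - a.re)^2 + ((f z₂).im - a.im)^2 := by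
    rw [Complex.sq_norm]; simp [Complex.normSq_apply]; ring
  have hB2 : ‖f z₂ - conj a‖ ^ 2
      = ((f z₂).re - a.re)^2 + ((f z₂).im + a.im)^2 := by
    rw [Complex.sq_norm]; simp [Complex.normSq_apply]; ring
  rw [div_le_div_iff₀ hy₂ hy₁]
  by_contra hcon
  push_neg at hcon
  have h1 : 0 < (f z₂).im * y₁ - a.im * y₂ := by linarith
  have h2 : 0 < (f z₂).im * y₂ - a.im * y₁ := by
    nlinarith [mul_nonneg hfz.le (sub_nonneg.mpr h12), mul_nonneg ha.le (sub_nonneg.mpr h12)]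
  have K2 : (((f z₂).re - a.re)^2 + ((f z₂).im - a.im)^2) * (y₂ + y₁)^2
      ≤ (((f z₂).re - a.re)^2 + ((f z₂).im + a.im)^2) * (y₂ - y₁)^2 := by
    calc (((f z₂).re - a.re)^2 + ((f z₂).im - a.im)^2) * (y₂ + y₁)^2
        = (‖f z₂ - a‖ * (y₂ + y₁)) * (‖f z₂ - a‖ * (y₂ + y₁)) := by
          rw [← hA]; ring
      _ ≤ ((y₂ - y₁) * ‖f z₂ - conj a‖) * ((y₂ - y₁) * ‖f z₂ - conj a‖) := K
      _ = (((f z₂).re - a.re)^2 + ((f z₂).im + a.im)^2) * (y₂ - y₁)^2 := by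
          rw [← hB2]; ring
  nlinarith [K2, mul_pos h1 h2,
    mul_nonneg (mul_pos hy₁ hy₂).le (sq_nonneg ((f z₂).re - a.re))]
end
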